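/- arXiv:1703.05685 — 5 statements merged into one kernel-verified Lean document; each statement's English description precedes it below -/
import Mathlib

section
/- Let G be a graph with a fixed linear ordering of its vertices, and let Ĝ be the graph whose vertices are the edges (u_i,u_j) of G with i<j, where (u_i,u_j) and (u_k,u_l) with j≤l are adjacent iff i=k, or j=k, or (j=l and u_i,u_k are not adjacent in G). Then there is a bijection φ from the set of clique covers of G to the set of independent sets of Ĝ such that |φ(Q)| = n − |Q| for every clique cover Q, where n = |V(G)|. -/
open Polynomial

/-- A clique cover of `G`: a partition of the vertex set into parts each inducing a clique. -/
def SimpleGraph.IsCliqueCover {V : Type*} [Fintype V] [DecidableEq V] (G : SimpleGraph V)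
    (P : Finpartition (Finset.univ : Finset V)) : Prop :=
  ∀ p ∈ P.parts, G.IsClique (p : Set V)

/-- `a_k(G)`: the number of clique covers of `G` with exactly `k` parts. -/
noncomputable def numCliqueCovers {V : Type*} [Fintype V] [DecidableEq V] (G : SimpleGraph V)
    (k : ℕ) : ℕ :=
  {P : Finpartition (Finset.univ : Finset V) | G.IsCliqueCover P ∧ P.parts.card = k}.ncard

/-- A finset of vertices is independent: pairwise non-adjacent. -/
def SimpleGraph.IsIndepFinset {W : Type*} (H : SimpleGraph W) (s : Finset W) : Prop :=
  ∀ v ∈ s, ∀ w ∈ s, ¬ H.Adj v w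

/-- `i_k(H)`: the number of independent sets of size `k` in `H`. -/
noncomputable def numIndepSets {W : Type*} (H : SimpleGraph W) (k : ℕ) : ℕ :=
  {s : Finset W | H.IsIndepFinset s ∧ s.card = k}.ncard

/-- The auxiliary one-sided relation in the construction of `Ĝ`:
for edges `e = (u_i,u_j)`, `f = (u_k,u_l)` with `j ≤ l`, they are related iff
`i = k`, or `j = k`, or (`j = l` and `u_i, u_k` non-adjacent). -/
def hatRel {n : ℕ} (G : SimpleGraph (Fin n)) (e f : Fin n × Fin n) : Prop :=
  e.2 ≤ f.2 ∧ (e.1 = f.1 ∨ e.2 = f.1 ∨ (e.2 = f.2 ∧ ¬ G.Adj e.1 f.1))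

/-- The graph `Ĝ` associated to `G` with its vertex ordering: vertices are the
edges `(u_i,u_j)` with `i < j`. -/
def hatGraph {n : ℕ} (G : SimpleGraph (Fin n)) :
    SimpleGraph {p : Fin n × Fin n // p.1 < p.2 ∧ G.Adj p.1 p.2} where
  Adj e f := e ≠ f ∧ (hatRel G e.1 f.1 ∨ hatRel G f.1 e.1)
  symm := ⟨fun e f h => ⟨h.1.symm, h.2.symm⟩⟩
  loopless := ⟨fun e h => h.1 rfl⟩

/-- The independence polynomial `I(H,x) = Σ_k (-1)^k i_k(H) x^k` (over `ℝ`). -/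
noncomputable def indepPoly {W : Type*} [Fintype W] (H : SimpleGraph W) : Polynomial ℝ :=
  ∑ k ∈ Finset.range (Fintype.card W + 1), C ((-1 : ℝ) ^ k * (numIndepSets H k : ℝ)) * X ^ k

/-- The adjoint polynomial `h(G,x) = Σ_k (-1)^{n-k} a_k(G) x^k` (over `ℝ`). -/
noncomputable def adjPoly {V : Type*} [Fintype V] [DecidableEq V] (G : SimpleGraph V) :
    Polynomial ℝ :=
  ∑ k ∈ Finset.range (Fintype.card V + 1),
    C ((-1 : ℝ) ^ (Fintype.card V - k) * (numCliqueCovers G k : ℝ)) * X ^ k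

/-- `h*(G,x) = x^n h(G,1/x) = Σ_k (-1)^k a_{n-k}(G) x^k` (over `ℝ`). -/
noncomputable def hStarPoly {V : Type*} [Fintype V] [DecidableEq V] (G : SimpleGraph V) :
    Polynomial ℝ :=
  ∑ k ∈ Finset.range (Fintype.card V + 1),
    C ((-1 : ℝ) ^ k * (numCliqueCovers G (Fintype.card V - k) : ℝ)) * X ^ k

/-- Integer version of the independence polynomial. -/
noncomputable def indepPolyZ {W : Type*} [Fintype W] (H : SimpleGraph W) : Polynomial ℤ :=
  ∑ k ∈ Finset.range (Fintype.card W + 1), C ((-1 : ℤ) ^ k * (numIndepSets H k : ℤ)) * X ^ k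

/-- Integer version of `h*`. -/
noncomputable def hStarPolyZ {V : Type*} [Fintype V] [DecidableEq V] (G : SimpleGraph V) :
    Polynomial ℤ :=
  ∑ k ∈ Finset.range (Fintype.card V + 1),
    C ((-1 : ℤ) ^ k * (numCliqueCovers G (Fintype.card V - k) : ℤ)) * X ^ k

/-- A finset of edges forming a matching in `G`. -/
def SimpleGraph.IsMatchingFinset {V : Type*} (G : SimpleGraph V) (s : Finset (Sym2 V)) : Prop :=
  (↑s : Set (Sym2 V)) ⊆ G.edgeSet ∧
    ∀ e ∈ s, ∀ f ∈ s, e ≠ f → ∀ v, ¬(v ∈ e ∧ v ∈ f)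

/-- `m_k(G)`: number of matchings of size `k`. -/
noncomputable def numMatchings {V : Type*} (G : SimpleGraph V) (k : ℕ) : ℕ :=
  {s : Finset (Sym2 V) | G.IsMatchingFinset s ∧ s.card = k}.ncard

/-- The matching polynomial `M(G,x) = Σ_k (-1)^k m_k(G) x^{n-k}` (over `ℝ`). -/
noncomputable def matchPoly {V : Type*} [Fintype V] (G : SimpleGraph V) : Polynomial ℝ :=
  ∑ k ∈ Finset.range (Fintype.card V + 1),
    C ((-1 : ℝ) ^ k * (numMatchings G k : ℝ)) * X ^ (Fintype.card V - k)

/-- The line graph `L(G)`: vertices are the edges of `G`, adjacent iff distinct and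
sharing an endpoint. -/
def lineGraph' {V : Type*} (G : SimpleGraph V) : SimpleGraph G.edgeSet where
  Adj e f := e ≠ f ∧ ∃ v, v ∈ (e : Sym2 V) ∧ v ∈ (f : Sym2 V)
  symm := ⟨fun e f h => ⟨h.1.symm, h.2.choose, h.2.choose_spec.2, h.2.choose_spec.1⟩⟩
  loopless := ⟨fun e h => h.1 rfl⟩

/-- `H ∪ K₁`: the disjoint union of `H` with one isolated vertex. -/
def addIsolated {V : Type*} (H : SimpleGraph V) : SimpleGraph (V ⊕ Unit) where
  Adj x y := ∃ a b, x = Sum.inl a ∧ y = Sum.inl b ∧ H.Adj a b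
  symm := ⟨by rintro x y ⟨a, b, rfl, rfl, h⟩; exact ⟨b, a, rfl, rfl, h.symm⟩⟩
  loopless := ⟨by rintro x ⟨a, b, rfl, h, hadj⟩; cases Sum.inl_injective h; exact hadj.ne rfl⟩

/-- `b` is the smallest zero of `p` in `(0,1]`. -/
def IsBetaZero (p : Polynomial ℝ) (b : ℝ) : Prop :=
  b ∈ Set.Ioc (0 : ℝ) 1 ∧ p.eval b = 0 ∧ ∀ y ∈ Set.Ioc (0 : ℝ) 1, p.eval y = 0 → b ≤ y

/-- `g` is the largest real zero of `p`. -/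
def IsGammaZero (p : Polynomial ℝ) (g : ℝ) : Prop :=
  p.eval g = 0 ∧ ∀ y : ℝ, p.eval y = 0 → y ≤ g

namespace Stmt2Aux

open Finset

variable {n : ℕ} (G : SimpleGraph (Fin n))

abbrev E (G : SimpleGraph (Fin n)) := {p : Fin n × Fin n // p.1 < p.2 ∧ G.Adj p.1 p.2}

noncomputable instance : Fintype (E G) := Fintype.ofFinite _

/-! ### From clique covers to independent sets -/

/-- The maximum of the part containing `v`. -/
noncomputable def maxP (P : Finpartition (Finset.univ : Finset (Fin n))) (v : Fin n) : Fin n :=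
  (P.part v).max' ⟨v, P.mem_part (mem_univ v)⟩

variable {P : Finpartition (Finset.univ : Finset (Fin n))}

lemma mem_part' (P : Finpartition (Finset.univ : Finset (Fin n))) (v : Fin n) :
    v ∈ P.part v := P.mem_part (mem_univ v)

lemma maxP_mem (P : Finpartition (Finset.univ : Finset (Fin n))) (v : Fin n) :
    maxP P v ∈ P.part v := Finset.max'_mem _ _

lemma le_maxP (P : Finpartition (Finset.univ : Finset (Fin n))) (v : Fin n) :
    v ≤ maxP P v := Finset.le_max' _ _ (mem_part' P v)

lemma max'_eq_of_set_eq {s t : Finset (Fin n)} (h : s = t) (hs : s.Nonempty) (ht : t.Nonempty) :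
    s.max' hs = t.max' ht := by subst h; rfl

lemma maxP_eq_of_part_eq {v w : Fin n} (h : P.part v = P.part w) : maxP P v = maxP P w :=
  max'_eq_of_set_eq h _ _

lemma part_eq_of_maxP_eq {v w : Fin n} (h : maxP P v = maxP P w) : P.part v = P.part w :=
  P.eq_of_mem_parts (P.part_mem.2 (mem_univ v)) (P.part_mem.2 (mem_univ w))
    (maxP_mem P v) (h ▸ maxP_mem P w)

lemma maxP_maxP (P : Finpartition (Finset.univ : Finset (Fin n))) (v : Fin n) :
    maxP P (maxP P v) = maxP P v := by
  have h : P.part (maxP P v) = P.part v :=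
    P.part_eq_of_mem (P.part_mem.2 (mem_univ v)) (maxP_mem P v)
  exact max'_eq_of_set_eq h _ _

/-- The independent set associated to a clique cover. -/
noncomputable def sOf (P : Finpartition (Finset.univ : Finset (Fin n))) : Finset (E G) :=
  Finset.univ.filter (fun e => e.1.2 = maxP P e.1.1)

lemma mem_sOf {e : E G} : e ∈ sOf G P ↔ e.1.2 = maxP P e.1.1 := by
  simp [sOf]

lemma adj_of_mem_part (hP : G.IsCliqueCover P) {v x y : Fin n}
    (hx : x ∈ P.part v) (hy : y ∈ P.part v) (hne : x ≠ y) : G.Adj x y :=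
  (hP _ (P.part_mem.2 (mem_univ v))) (Finset.mem_coe.2 hx) (Finset.mem_coe.2 hy) hne

lemma eq_of_maxP_first {e f : E G} (he : e ∈ sOf G P) (hf : f ∈ sOf G P)
    (h : e.1.1 = f.1.1) : e = f := by
  have he' := (mem_sOf G).1 he
  have hf' := (mem_sOf G).1 hf
  apply Subtype.ext
  apply Prod.ext h
  rw [he', hf', h]

lemma no_hatRel (hP : G.IsCliqueCover P) {e f : E G} (he : e ∈ sOf G P) (hf : f ∈ sOf G P)
    (hne : e ≠ f) (h : hatRel G e.1 f.1) : False := by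
  have he' := (mem_sOf G).1 he
  have hf' := (mem_sOf G).1 hf
  obtain ⟨hle, h1 | h2 | h3⟩ := h
  · exact hne (eq_of_maxP_first G he hf h1)
  · -- e.2 = f.1 : then f.1 is a max point, but f.1 < f.2 = maxP f.1
    have : maxP P f.1.1 = f.1.1 := by
      rw [← h2, he', maxP_maxP]
    have hlt : f.1.1 < f.1.2 := f.2.1
    rw [hf', this] at hlt
    exact lt_irrefl _ hlt
  · obtain ⟨h22, hnadj⟩ := h3
    have hne1 : e.1.1 ≠ f.1.1 := fun hh => hne (eq_of_maxP_first G he hf hh)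
    have hmax : maxP P e.1.1 = maxP P f.1.1 := by rw [← he', ← hf', h22]
    have hpart : P.part e.1.1 = P.part f.1.1 := part_eq_of_maxP_eq hmax
    exact hnadj (adj_of_mem_part G hP (mem_part' P e.1.1) (hpart ▸ mem_part' P f.1.1) hne1)

lemma hatGraph_adj_iff {e f : E G} :
    (hatGraph G).Adj e f ↔ e ≠ f ∧ (hatRel G e.1 f.1 ∨ hatRel G f.1 e.1) := Iff.rfl

lemma indep_sOf (hP : G.IsCliqueCover P) : (hatGraph G).IsIndepFinset (sOf G P) := by
  intro e he f hf hadj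
  obtain ⟨hne, h | h⟩ := (hatGraph_adj_iff G).1 hadj
  · exact no_hatRel G hP he hf hne h
  · exact no_hatRel G hP hf he (Ne.symm hne) h

lemma card_sOf (hP : G.IsCliqueCover P) : (sOf G P).card = n - P.parts.card := by
  have h1 : (sOf G P).card = (Finset.univ.filter (fun v : Fin n => v ≠ maxP P v)).card := by
    apply Finset.card_bij (fun e _ => e.1.1)
    · intro e he
      simp only [mem_filter, mem_univ, true_and]
      have := (mem_sOf G).1 he
      exact fun hh => absurd (this ▸ hh ▸ e.2.1) (lt_irrefl _)
    · intro e he f hf h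
      exact eq_of_maxP_first G he hf h
    · intro v hv
      simp only [mem_filter, mem_univ, true_and] at hv
      have hlt : v < maxP P v := lt_of_le_of_ne (le_maxP P v) hv
      have hadj : G.Adj v (maxP P v) :=
        adj_of_mem_part G hP (mem_part' P v) (maxP_mem P v) hv
      exact ⟨⟨(v, maxP P v), hlt, hadj⟩, (mem_sOf G).2 rfl, rfl⟩
  have h2 : (Finset.univ.filter (fun v : Fin n => v = maxP P v)).card = P.parts.card := by
    apply Finset.card_bij (fun v _ => P.part v)
    · intro v hv
      exact P.part_mem.2 (mem_univ v)
    · intro v hv w hw h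
      simp only [mem_filter, mem_univ, true_and] at hv hw
      rw [hv, hw, maxP_eq_of_part_eq h]
    · intro p hp
      obtain ⟨v, hv⟩ := P.nonempty_of_mem_parts hp
      have hpart : P.part v = p := P.part_eq_of_mem hp hv
      refine ⟨maxP P v, ?_, ?_⟩
      · simp only [mem_filter, mem_univ, true_and]
        exact (maxP_maxP P v).symm
      · rw [P.part_eq_of_mem hp (hpart ▸ maxP_mem P v)]
  have h3 := Finset.card_filter_add_card_filter_not
    (s := (Finset.univ : Finset (Fin n))) (p := fun v => v = maxP P v)
  simp only [Finset.card_univ, Fintype.card_fin] at h3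
  rw [h1]
  have : (Finset.univ.filter (fun v : Fin n => ¬ v = maxP P v)).card
      = (Finset.univ.filter (fun v : Fin n => v ≠ maxP P v)).card := rfl
  omega

/-! ### From independent sets to clique covers -/

/-- The root (eventual maximum) of a vertex determined by an independent set. -/
noncomputable def root (s : Finset (E G)) (v : Fin n) : Fin n :=
  if h : ∃ e ∈ s, e.1.1 = v then h.choose.1.2 else v

variable {s : Finset (E G)}

lemma first_eq (hs : (hatGraph G).IsIndepFinset s) {e f : E G} (he : e ∈ s) (hf : f ∈ s)
    (h : e.1.1 = f.1.1) : e = f := by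
  by_contra hne
  rcases le_total e.1.2 f.1.2 with hle | hle
  · exact hs e he f hf ((hatGraph_adj_iff G).2 ⟨hne, Or.inl ⟨hle, Or.inl h⟩⟩)
  · exact hs f hf e he ((hatGraph_adj_iff G).2 ⟨Ne.symm hne, Or.inl ⟨hle, Or.inl h.symm⟩⟩)

lemma root_spec (hs : (hatGraph G).IsIndepFinset s) {e : E G} (he : e ∈ s) :
    root G s e.1.1 = e.1.2 := by
  have h : ∃ f ∈ s, f.1.1 = e.1.1 := ⟨e, he, rfl⟩
  have hspec := h.choose_spec
  have heq : h.choose = e := first_eq G hs hspec.1 he hspec.2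
  rw [root, dif_pos h, heq]

lemma mem_of_root_ne {v : Fin n} (h : root G s v ≠ v) :
    ∃ e ∈ s, e.1.1 = v ∧ e.1.2 = root G s v := by
  by_cases hex : ∃ e ∈ s, e.1.1 = v
  · have hspec := hex.choose_spec
    exact ⟨hex.choose, hspec.1, hspec.2, by rw [root, dif_pos hex]⟩
  · exact absurd (by rw [root, dif_neg hex]) h

lemma lt_root {v : Fin n} (h : root G s v ≠ v) : v < root G s v := by
  obtain ⟨e, _, h1, h2⟩ := mem_of_root_ne G h
  have he := e.2.1
  rw [h1, h2] at he
  exact he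

lemma root_root (hs : (hatGraph G).IsIndepFinset s) (v : Fin n) :
    root G s (root G s v) = root G s v := by
  by_cases h1 : root G s v = v
  · rw [h1]; exact h1
  · obtain ⟨e, he, he1, he2⟩ := mem_of_root_ne G h1
    by_contra h2
    obtain ⟨f, hf, hf1, hf2⟩ := mem_of_root_ne G h2
    have hef : e ≠ f := by
      intro hh
      rw [hh] at he1
      rw [he1] at hf1
      exact h1 hf1.symm
    have hrel : hatRel G e.1 f.1 := by
      refine ⟨?_, Or.inr (Or.inl (he2.trans hf1.symm))⟩
      rw [he2, ← hf1]
      exact le_of_lt f.2.1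
    exact hs e he f hf ((hatGraph_adj_iff G).2 ⟨hef, Or.inl hrel⟩)

/-- The clique cover associated to an independent set. -/
noncomputable def POf (s : Finset (E G)) : Finpartition (Finset.univ : Finset (Fin n)) :=
  @Finpartition.ofSetoid (Fin n) _ _ (Setoid.ker (root G s))
    (Classical.decRel _)

lemma mem_part_POf {v w : Fin n} : w ∈ (POf G s).part v ↔ root G s w = root G s v := by
  rw [POf]
  rw [@Finpartition.mem_part_ofSetoid_iff_rel (Fin n) _ v _ (Setoid.ker (root G s))
    (Classical.decRel _) w]
  exact ⟨fun h => h.symm, fun h => h.symm⟩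

lemma maxP_POf (hs : (hatGraph G).IsIndepFinset s) (v : Fin n) :
    maxP (POf G s) v = root G s v := by
  apply le_antisymm
  · apply Finset.max'_le
    intro w hw
    have hw' := (mem_part_POf G).1 hw
    by_cases h : root G s w = w
    · rw [← hw', h]
    · exact le_of_lt (hw' ▸ lt_root G h)
  · exact Finset.le_max' _ _ ((mem_part_POf G).2 (root_root G hs v))

lemma cover_POf (hs : (hatGraph G).IsIndepFinset s) : G.IsCliqueCover (POf G s) := by
  intro p hp
  obtain ⟨v, hv⟩ := (POf G s).nonempty_of_mem_parts hp
  have hpart : (POf G s).part v = p := (POf G s).part_eq_of_mem hp hv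
  rw [← hpart]
  intro x hx y hy hne
  have hx' : root G s x = root G s v := (mem_part_POf G).1 (Finset.mem_coe.1 hx)
  have hy' : root G s y = root G s v := (mem_part_POf G).1 (Finset.mem_coe.1 hy)
  have hxy : root G s x = root G s y := hx'.trans hy'.symm
  by_cases hxm : root G s x = x
  · -- x is the root; y ≠ x, so the edge (y, x) is in s
    have hym : root G s y ≠ y := by
      intro hh
      exact hne (hxm.symm.trans (hxy.trans hh))
    obtain ⟨f, hf, hf1, hf2⟩ := mem_of_root_ne G hym
    have hadj : G.Adj f.1.1 f.1.2 := f.2.2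
    rw [hf1, hf2, ← hxy, hxm] at hadj
    exact hadj.symm
  · by_cases hym : root G s y = y
    · obtain ⟨e, he, he1, he2⟩ := mem_of_root_ne G hxm
      have hadj : G.Adj e.1.1 e.1.2 := e.2.2
      rwa [he1, he2, hxy, hym] at hadj
    · obtain ⟨e, he, he1, he2⟩ := mem_of_root_ne G hxm
      obtain ⟨f, hf, hf1, hf2⟩ := mem_of_root_ne G hym
      have hef : e ≠ f := by
        intro hh
        rw [hh, hf1] at he1
        exact hne he1.symm
      by_contra hadj
      have hrel : hatRel G e.1 f.1 := by
        refine ⟨?_, Or.inr (Or.inr ⟨?_, ?_⟩)⟩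
        · rw [he2, hf2, hxy]
        · rw [he2, hf2, hxy]
        · rwa [he1, hf1]
      exact hs e he f hf ((hatGraph_adj_iff G).2 ⟨hef, Or.inl hrel⟩)

lemma sOf_POf (hs : (hatGraph G).IsIndepFinset s) : sOf G (POf G s) = s := by
  ext e
  rw [mem_sOf, maxP_POf G hs]
  constructor
  · intro h
    have hne : root G s e.1.1 ≠ e.1.1 := by
      rw [← h]
      exact e.2.1.ne'
    obtain ⟨f, hf, hf1, hf2⟩ := mem_of_root_ne G hne
    have : e = f := by
      apply Subtype.ext
      apply Prod.ext hf1.symm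
      rw [h, hf2]
    rw [this]; exact hf
  · intro he
    exact (root_spec G hs he).symm

lemma root_sOf (hP : G.IsCliqueCover P) (v : Fin n) :
    root G (sOf G P) v = maxP P v := by
  rw [root]
  split_ifs with h
  · have hspec := h.choose_spec
    have h2 := (mem_sOf G).1 hspec.1
    rw [h2, hspec.2]
  · by_contra hne
    have hne' : v ≠ maxP P v := hne
    have hlt : v < maxP P v := lt_of_le_of_ne (le_maxP P v) hne'
    have hadj : G.Adj v (maxP P v) :=
      adj_of_mem_part G hP (mem_part' P v) (maxP_mem P v) hne'
    exact h ⟨⟨(v, maxP P v), hlt, hadj⟩, (mem_sOf G).2 rfl, rfl⟩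

lemma part_POf_sOf (hP : G.IsCliqueCover P) (v : Fin n) :
    (POf G (sOf G P)).part v = P.part v := by
  ext w
  rw [mem_part_POf, root_sOf G hP, root_sOf G hP]
  constructor
  · intro h
    exact (part_eq_of_maxP_eq h) ▸ mem_part' P w
  · intro hw
    exact maxP_eq_of_part_eq (P.part_eq_of_mem (P.part_mem.2 (mem_univ v)) hw)

lemma POf_sOf (hP : G.IsCliqueCover P) : POf G (sOf G P) = P := by
  apply Finpartition.ext
  ext p
  constructor
  · intro hp
    obtain ⟨v, hv⟩ := (POf G (sOf G P)).nonempty_of_mem_parts hp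
    have : (POf G (sOf G P)).part v = p := (POf G (sOf G P)).part_eq_of_mem hp hv
    rw [← this, part_POf_sOf G hP]
    exact P.part_mem.2 (mem_univ v)
  · intro hp
    obtain ⟨v, hv⟩ := P.nonempty_of_mem_parts hp
    have : P.part v = p := P.part_eq_of_mem hp hv
    rw [← this, ← part_POf_sOf G hP]
    exact (POf G (sOf G P)).part_mem.2 (mem_univ v)

end Stmt2Aux

/-- there is a bijection `φ` from the clique covers of `G` to the
independent sets of `Ĝ` with `|φ(Q)| = n - |Q|`. -/
theorem stmt2 {n : ℕ} (G : SimpleGraph (Fin n)) :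
    ∃ φ : {P : Finpartition (Finset.univ : Finset (Fin n)) // G.IsCliqueCover P} ≃
          {s : Finset {p : Fin n × Fin n // p.1 < p.2 ∧ G.Adj p.1 p.2} //
            (hatGraph G).IsIndepFinset s},
      ∀ Q, (φ Q).1.card = n - Q.1.parts.card := by
  refine ⟨⟨fun P => ⟨Stmt2Aux.sOf G P.1, Stmt2Aux.indep_sOf G P.2⟩,
           fun s => ⟨Stmt2Aux.POf G s.1, Stmt2Aux.cover_POf G s.2⟩, ?_, ?_⟩, ?_⟩
  · intro P
    exact Subtype.ext (Stmt2Aux.POf_sOf G P.2)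
  · intro s
    exact Subtype.ext (Stmt2Aux.sOf_POf G s.2)
  · intro Q
    exact Stmt2Aux.card_sOf G Q.2
end

section
/- Let G be a graph with a fixed linear ordering of its vertices and let Ĝ be constructed as follows: V(Ĝ) is the set of edges (u_i,u_j) of G with i<j, and (u_i,u_j), (u_k,u_l) with j≤l are adjacent in Ĝ iff i=k, or j=k, or (j=l and u_i,u_k non-adjacent in G). Then for every k ≥ 0, the number of independent sets of size k in Ĝ equals the number of clique covers of G with exactly n−k parts, where n = |V(G)|. -/
open Polynomial

section Stmt3Aux

open Finset

variable {n : ℕ} {G : SimpleGraph (Fin n)}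

/-- Vertex type of the hat graph. -/
abbrev HatV (G : SimpleGraph (Fin n)) := {p : Fin n × Fin n // p.1 < p.2 ∧ G.Adj p.1 p.2}

/-- Unfolded form of independence in the hat graph. -/
def MyIndep (G : SimpleGraph (Fin n)) (S : Finset (HatV G)) : Prop :=
  ∀ e ∈ S, ∀ f ∈ S, e ≠ f → ¬ hatRel G e.1 f.1

lemma myIndep_iff (S : Finset (HatV G)) :
    (hatGraph G).IsIndepFinset S ↔ MyIndep G S := by
  constructor
  · intro h e he f hf hne hrel
    exact h e he f hf (show e ≠ f ∧ (hatRel G e.1 f.1 ∨ hatRel G f.1 e.1) from ⟨hne, Or.inl hrel⟩)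
  · rintro h e he f hf (⟨hne, hrel | hrel⟩ : e ≠ f ∧ (hatRel G e.1 f.1 ∨ hatRel G f.1 e.1))
    · exact h e he f hf hne hrel
    · exact h f hf e he hne.symm hrel

variable {S : Finset (HatV G)} {e f : HatV G} {v w : Fin n}

lemma fst_injOn (hS : MyIndep G S) (he : e ∈ S) (hf : f ∈ S) (h : e.1.1 = f.1.1) : e = f := by
  by_contra hne
  rcases le_total e.1.2 f.1.2 with hle | hle
  · exact hS e he f hf hne ⟨hle, Or.inl h⟩
  · exact hS f hf e he (Ne.symm hne) ⟨hle, Or.inl h.symm⟩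

lemma no_src_tgt (hS : MyIndep G S) (he : e ∈ S) (hf : f ∈ S) (h : e.1.2 = f.1.1) : False := by
  have hne : e ≠ f := by
    rintro rfl
    exact absurd h e.2.1.ne'
  exact hS e he f hf hne ⟨by rw [h]; exact f.2.1.le, Or.inr (Or.inl h)⟩

lemma adj_of_same_tgt (hS : MyIndep G S) (he : e ∈ S) (hf : f ∈ S) (hne : e ≠ f)
    (h : e.1.2 = f.1.2) : G.Adj e.1.1 f.1.1 := by
  by_contra hadj
  exact hS e he f hf hne ⟨le_of_eq h, Or.inr (Or.inr ⟨h, hadj⟩)⟩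

/-- The "target" map: a source vertex is sent to the other endpoint of its edge. -/
noncomputable def tgt (S : Finset (HatV G)) (v : Fin n) : Fin n :=
  if h : ∃ e ∈ S, e.1.1 = v then h.choose.1.2 else v

lemma tgt_eq (hS : MyIndep G S) (he : e ∈ S) : tgt S e.1.1 = e.1.2 := by
  have h : ∃ f ∈ S, f.1.1 = e.1.1 := ⟨e, he, rfl⟩
  rw [tgt, dif_pos h]
  obtain ⟨hf, hfe⟩ := h.choose_spec
  rw [fst_injOn hS hf he hfe]

lemma tgt_of_not_src (h : ¬ ∃ e ∈ S, e.1.1 = v) : tgt S v = v := dif_neg h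

lemma lt_tgt_of_src (h : ∃ e ∈ S, e.1.1 = v) : v < tgt S v := by
  rw [tgt, dif_pos h]
  obtain ⟨-, hfe⟩ := h.choose_spec
  exact lt_of_le_of_lt (le_of_eq hfe.symm) h.choose.2.1

lemma src_of_tgt_ne (h : tgt S v ≠ v) : ∃ e ∈ S, e.1.1 = v := by
  by_contra hc; exact h (dif_neg hc)

lemma le_tgt (S : Finset (HatV G)) (v : Fin n) : v ≤ tgt S v := by
  by_cases h : ∃ e ∈ S, e.1.1 = v
  · exact (lt_tgt_of_src h).le
  · exact le_of_eq (tgt_of_not_src h).symm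

lemma tgt_idem (hS : MyIndep G S) (v : Fin n) : tgt S (tgt S v) = tgt S v := by
  by_cases h : ∃ e ∈ S, e.1.1 = v
  · obtain ⟨e, he, rfl⟩ := h
    rw [tgt_eq hS he]
    apply tgt_of_not_src
    rintro ⟨f, hf, hfe⟩
    exact no_src_tgt hS he hf hfe.symm
  · rw [tgt_of_not_src h]
    exact tgt_of_not_src h

/-- The fiber of `tgt S` above `r`. -/
noncomputable def fiber (S : Finset (HatV G)) (r : Fin n) : Finset (Fin n) :=
  univ.filter (fun v => tgt S v = r)

lemma mem_fiber {r : Fin n} : v ∈ fiber S r ↔ tgt S v = r := by simp [fiber]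

/-- The parts of the partition associated to an independent set. -/
noncomputable def parts' (S : Finset (HatV G)) : Finset (Finset (Fin n)) :=
  (univ.image (tgt S)).image (fiber S)

/-- The clique cover associated to an independent set in the hat graph. -/
noncomputable def toPart (S : Finset (HatV G)) (hS : MyIndep G S) :
    Finpartition (univ : Finset (Fin n)) where
  parts := parts' S
  supIndep := by
    rw [Finset.supIndep_iff_pairwiseDisjoint]
    intro p hp q hq hpq
    simp only [parts', coe_image, Set.mem_image] at hp hq
    obtain ⟨r1, -, rfl⟩ := hp
    obtain ⟨r2, -, rfl⟩ := hq
    simp only [Function.onFun, id_eq, Finset.disjoint_left]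
    intro v hv1 hv2
    rw [mem_fiber] at hv1 hv2
    exact hpq (by rw [← hv1, hv2])
  sup_parts := by
    apply Finset.Subset.antisymm
    · intro x hx
      exact mem_univ x
    · intro v _
      rw [Finset.mem_sup]
      refine ⟨fiber S (tgt S v), ?_, ?_⟩
      · exact mem_image_of_mem _ (mem_image_of_mem _ (mem_univ v))
      · simp only [id_eq, mem_fiber]
  bot_notMem := by
    intro h
    simp only [parts', bot_eq_empty, mem_image] at h
    obtain ⟨r, hr, hfib⟩ := h
    obtain ⟨u, -, rfl⟩ := hr
    have hm : tgt S u ∈ fiber S (tgt S u) := mem_fiber.mpr (tgt_idem hS u)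
    rw [hfib] at hm
    exact absurd hm (Finset.notMem_empty _)

lemma edge_of_mem_fiber (hS : MyIndep G S) {r : Fin n} (hv : v ∈ fiber S r) (hvr : v ≠ r) :
    ∃ e ∈ S, e.1 = (v, r) := by
  rw [mem_fiber] at hv
  have hne : tgt S v ≠ v := by rw [hv]; exact Ne.symm hvr
  obtain ⟨e, he, rfl⟩ := src_of_tgt_ne hne
  have h2 : e.1.2 = r := by rw [← tgt_eq hS he, hv]
  exact ⟨e, he, Prod.ext rfl h2⟩

lemma toPart_isCliqueCover (hS : MyIndep G S) : G.IsCliqueCover (toPart S hS) := by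
  intro p hp
  simp only [toPart, parts', mem_image] at hp
  obtain ⟨r, hr, rfl⟩ := hp
  intro x hx y hy hxy
  rw [Finset.mem_coe] at hx hy
  by_cases hxr : x = r <;> by_cases hyr : y = r
  · exact absurd (hxr.trans hyr.symm) hxy
  · obtain ⟨e, he, hev⟩ := edge_of_mem_fiber hS hy hyr
    have h := e.2.2
    rw [hev] at h
    subst hxr
    exact h.symm
  · obtain ⟨e, he, hev⟩ := edge_of_mem_fiber hS hx hxr
    have h := e.2.2
    rw [hev] at h
    subst hyr
    exact h
  · obtain ⟨e, he, hex⟩ := edge_of_mem_fiber hS hx hxr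
    obtain ⟨f, hf, hfy⟩ := edge_of_mem_fiber hS hy hyr
    have hne : e ≠ f := by
      intro h
      rw [h, hfy] at hex
      exact hxy (congrArg Prod.fst hex).symm
    have h := adj_of_same_tgt hS he hf hne (by rw [hex, hfy])
    rw [hex, hfy] at h
    exact h

lemma mem_image_tgt (hS : MyIndep G S) {r : Fin n} :
    r ∈ univ.image (tgt S) ↔ tgt S r = r := by
  constructor
  · rintro hr
    obtain ⟨u, -, rfl⟩ := mem_image.mp hr
    exact tgt_idem hS u
  · intro h
    exact mem_image.mpr ⟨r, mem_univ r, h⟩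

lemma card_image_fst (hS : MyIndep G S) : (S.image (fun e => e.1.1)).card = S.card :=
  Finset.card_image_of_injOn (fun e he f hf h => fst_injOn hS he hf h)

lemma card_le_n (hS : MyIndep G S) : S.card ≤ n := by
  calc S.card = (S.image (fun e => e.1.1)).card := (card_image_fst hS).symm
    _ ≤ (univ : Finset (Fin n)).card := Finset.card_le_card (subset_univ _)
    _ = n := by simp

lemma card_toPart (hS : MyIndep G S) : (toPart S hS).parts.card = n - S.card := by
  have h1 : (parts' S).card = (univ.image (tgt S)).card := by
    show ((univ.image (tgt S)).image (fiber S)).card = _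
    apply Finset.card_image_of_injOn
    intro r1 h1 r2 h2 hf
    rw [Finset.mem_coe, mem_image_tgt hS] at h1 h2
    have hm : r1 ∈ fiber S r1 := mem_fiber.mpr h1
    rw [hf] at hm
    rw [← h1, mem_fiber.mp hm]
  have h2 : univ.image (tgt S) = univ \ S.image (fun e => e.1.1) := by
    ext r
    rw [mem_image_tgt hS, mem_sdiff]
    simp only [mem_univ, true_and, mem_image]
    constructor
    · intro h hc
      obtain ⟨e, he, hev⟩ := hc
      exact absurd h (lt_tgt_of_src ⟨e, he, hev⟩).ne'
    · intro h
      exact tgt_of_not_src (by simpa using h)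
  show (parts' S).card = n - S.card
  rw [h1, h2, Finset.card_sdiff_of_subset (subset_univ _), card_image_fst hS, card_univ, Fintype.card_fin]

/-! ### From clique covers to independent sets -/

variable {P : Finpartition (univ : Finset (Fin n))}

/-- The maximum of the part containing `v`. -/
noncomputable def rt (P : Finpartition (univ : Finset (Fin n))) (v : Fin n) : Fin n :=
  (P.part v).max' ⟨v, P.mem_part (mem_univ v)⟩

lemma rt_mem (P : Finpartition (univ : Finset (Fin n))) (v : Fin n) : rt P v ∈ P.part v :=
  Finset.max'_mem _ _

lemma le_rt (P : Finpartition (univ : Finset (Fin n))) (v : Fin n) : v ≤ rt P v :=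
  Finset.le_max' _ _ (P.mem_part (mem_univ v))

lemma part_congr (h : w ∈ P.part v) : P.part w = P.part v :=
  P.part_eq_of_mem (P.part_mem.mpr (mem_univ v)) h

lemma rt_congr (h : w ∈ P.part v) : rt P w = rt P v := by
  apply le_antisymm
  · apply Finset.le_max'
    rw [← part_congr h]
    exact rt_mem P w
  · apply Finset.le_max'
    rw [part_congr h]
    exact rt_mem P v

open Classical in
/-- The independent set associated to a clique cover. -/
noncomputable def SOf (P : Finpartition (univ : Finset (Fin n))) (G : SimpleGraph (Fin n)) :
    Finset (HatV G) :=
  univ.filter (fun e => e.1.2 = rt P e.1.1)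

lemma mem_SOf : e ∈ SOf P G ↔ e.1.2 = rt P e.1.1 := by
  simp [SOf]

lemma SOf_indep (hP : G.IsCliqueCover P) : MyIndep G (SOf P G) := by
  intro e he f hf hne hrel
  rw [mem_SOf] at he hf
  obtain ⟨hle, h | h | ⟨h, hadj⟩⟩ := hrel
  · apply hne
    apply Subtype.ext
    apply Prod.ext h
    rw [he, hf, h]
  · have h1 : f.1.1 ∈ P.part e.1.1 := by rw [← h, he]; exact rt_mem P _
    have h2 : rt P f.1.1 = rt P e.1.1 := rt_congr h1
    have h3 := f.2.1
    rw [hf, h2, ← he, h] at h3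
    exact lt_irrefl _ h3
  · have h1 : e.1.2 ∈ P.part e.1.1 := by rw [he]; exact rt_mem P _
    have h2 : e.1.2 ∈ P.part f.1.1 := by rw [h, hf]; exact rt_mem P _
    have hpq : P.part e.1.1 = P.part f.1.1 :=
      P.eq_of_mem_parts (P.part_mem.mpr (mem_univ _)) (P.part_mem.mpr (mem_univ _)) h1 h2
    have hx : f.1.1 ∈ P.part e.1.1 := hpq ▸ P.mem_part (mem_univ f.1.1)
    have hne' : e.1.1 ≠ f.1.1 := fun hh => hne (Subtype.ext (Prod.ext hh h))
    exact hadj (hP _ (P.part_mem.mpr (mem_univ e.1.1))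
      (Finset.mem_coe.mpr (P.mem_part (mem_univ e.1.1))) (Finset.mem_coe.mpr hx) hne')

lemma card_fixed_rt : (univ.filter (fun v => v = rt P v)).card = P.parts.card := by
  apply Finset.card_bij (fun v _ => P.part v)
  · intro v hv
    exact P.part_mem.mpr (mem_univ v)
  · intro v1 h1 v2 h2 he
    rw [mem_filter] at h1 h2
    have hm : v1 ∈ P.part v2 := by rw [← he]; exact P.mem_part (mem_univ v1)
    rw [h1.2, h2.2]
    exact rt_congr hm
  · intro p hp
    obtain ⟨v, hv⟩ := P.nonempty_of_mem_parts hp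
    have hne : p.Nonempty := ⟨v, hv⟩
    set m := p.max' hne with hm
    have hmp : m ∈ p := p.max'_mem hne
    have hpart : P.part m = p := P.part_eq_of_mem hp hmp
    refine ⟨m, ?_, hpart⟩
    rw [mem_filter]
    refine ⟨mem_univ m, ?_⟩
    have h3 : rt P m ∈ p := by rw [← hpart]; exact rt_mem P m
    exact (le_antisymm (p.le_max' _ h3) (le_rt P m)).symm

lemma card_SOf (hP : G.IsCliqueCover P) : (SOf P G).card = n - P.parts.card := by
  have himg : (SOf P G).image (fun e => e.1.1) = univ.filter (fun v => ¬ v = rt P v) := by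
    ext v
    simp only [mem_image, mem_filter, mem_univ, true_and]
    constructor
    · rintro ⟨e, he, rfl⟩
      rw [mem_SOf] at he
      have := e.2.1
      rw [he] at this
      exact this.ne
    · intro hv
      have hlt : v < rt P v := lt_of_le_of_ne (le_rt P v) hv
      have hadj : G.Adj v (rt P v) := hP _ (P.part_mem.mpr (mem_univ v))
        (Finset.mem_coe.mpr (P.mem_part (mem_univ v))) (Finset.mem_coe.mpr (rt_mem P v)) hv
      exact ⟨⟨(v, rt P v), hlt, hadj⟩, mem_SOf.mpr rfl, rfl⟩
  have hinj : Set.InjOn (fun e : HatV G => e.1.1) (SOf P G) := by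
    intro e he f hf h
    rw [Finset.mem_coe, mem_SOf] at he hf
    apply Subtype.ext
    apply Prod.ext h
    rw [he, hf]
    exact congrArg (rt P) h
  have h1 : (SOf P G).card = (univ.filter (fun v => ¬ v = rt P v)).card := by
    rw [← himg, Finset.card_image_of_injOn hinj]
  have h3 : univ.filter (fun v => ¬ v = rt P v) = univ \ univ.filter (fun v => v = rt P v) := by
    ext v
    simp [mem_sdiff]
  rw [h1, h3, Finset.card_sdiff_of_subset (filter_subset _ _), card_fixed_rt, card_univ, Fintype.card_fin]

/-! ### Round trips -/

lemma rt_toPart (hS : MyIndep G S) (v : Fin n) : rt (toPart S hS) v = tgt S v := by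
  have hmem : v ∈ fiber S (tgt S v) := mem_fiber.mpr rfl
  have hfib : fiber S (tgt S v) ∈ (toPart S hS).parts :=
    mem_image_of_mem _ (mem_image_of_mem _ (mem_univ v))
  have hpart : (toPart S hS).part v = fiber S (tgt S v) :=
    Finpartition.part_eq_of_mem _ hfib hmem
  apply le_antisymm
  · have h1 : rt (toPart S hS) v ∈ fiber S (tgt S v) := by
      rw [← hpart]; exact rt_mem _ v
    calc rt (toPart S hS) v ≤ tgt S (rt (toPart S hS) v) := le_tgt _ _
      _ = tgt S v := mem_fiber.mp h1
  · have h1 : tgt S v ∈ (toPart S hS).part v := by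
      rw [hpart]; exact mem_fiber.mpr (tgt_idem hS v)
    exact Finset.le_max' _ _ h1

lemma SOf_toPart (hS : MyIndep G S) : SOf (toPart S hS) G = S := by
  ext e
  rw [mem_SOf, rt_toPart hS]
  constructor
  · intro he
    have hne : tgt S e.1.1 ≠ e.1.1 := by rw [← he]; exact e.2.1.ne'
    obtain ⟨f, hf, hfe⟩ := src_of_tgt_ne hne
    have hff : f = e := Subtype.ext (Prod.ext hfe (by rw [← tgt_eq hS hf, hfe, ← he]))
    exact hff ▸ hf
  · intro he
    exact (tgt_eq hS he).symm

lemma tgt_SOf (hP : G.IsCliqueCover P) (hI : MyIndep G (SOf P G)) (v : Fin n) :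
    tgt (SOf P G) v = rt P v := by
  by_cases h : ∃ e ∈ SOf P G, e.1.1 = v
  · obtain ⟨e, he, rfl⟩ := h
    rw [tgt_eq hI he, mem_SOf.mp he]
  · rw [tgt_of_not_src h]
    by_contra hne
    have hlt : v < rt P v := lt_of_le_of_ne (le_rt P v) hne
    have hadj : G.Adj v (rt P v) := hP _ (P.part_mem.mpr (mem_univ v))
      (Finset.mem_coe.mpr (P.mem_part (mem_univ v))) (Finset.mem_coe.mpr (rt_mem P v)) hne
    exact h ⟨⟨(v, rt P v), hlt, hadj⟩, mem_SOf.mpr rfl, rfl⟩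

lemma fiber_SOf (hP : G.IsCliqueCover P) (hI : MyIndep G (SOf P G)) (u : Fin n) :
    fiber (SOf P G) (rt P u) = P.part u := by
  ext v
  rw [mem_fiber, tgt_SOf hP hI]
  constructor
  · intro h
    have h1 : rt P v ∈ P.part v := rt_mem P v
    have h2 : rt P v ∈ P.part u := by rw [h]; exact rt_mem P u
    have heq := P.eq_of_mem_parts (P.part_mem.mpr (mem_univ v)) (P.part_mem.mpr (mem_univ u)) h1 h2
    rw [← heq]
    exact P.mem_part (mem_univ v)
  · intro h
    exact rt_congr h

lemma toPart_SOf (hP : G.IsCliqueCover P) (hI : MyIndep G (SOf P G)) :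
    toPart (SOf P G) hI = P := by
  apply Finpartition.ext
  show parts' (SOf P G) = P.parts
  ext p
  simp only [parts', mem_image]
  constructor
  · rintro ⟨r, hr, rfl⟩
    obtain ⟨u, -, rfl⟩ := hr
    rw [tgt_SOf hP hI, fiber_SOf hP hI]
    exact P.part_mem.mpr (mem_univ u)
  · intro hp
    obtain ⟨v, hv⟩ := P.nonempty_of_mem_parts hp
    refine ⟨rt P v, ⟨v, mem_univ v, tgt_SOf hP hI v⟩, ?_⟩
    rw [fiber_SOf hP hI]
    exact P.part_eq_of_mem hp hv

end Stmt3Aux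

/-- for every `k ≥ 0`, the number of independent sets of size `k` in `Ĝ`
equals the number of clique covers of `G` with exactly `n - k` parts (interpreted as `0`
when `k > n`). -/
theorem stmt3 {n : ℕ} (G : SimpleGraph (Fin n)) (k : ℕ) :
    numIndepSets (hatGraph G) k = if k ≤ n then numCliqueCovers G (n - k) else 0 := by
  classical
  by_cases hk : k ≤ n
  · rw [if_pos hk]
    unfold numIndepSets numCliqueCovers
    rw [← Nat.card_coe_set_eq, ← Nat.card_coe_set_eq]
    apply Nat.card_congr
    exact {
      toFun := fun x => ⟨toPart x.1 ((myIndep_iff x.1).mp x.2.1),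
        toPart_isCliqueCover _, by rw [card_toPart, x.2.2]⟩
      invFun := fun y => ⟨SOf y.1 G, (myIndep_iff _).mpr (SOf_indep y.2.1),
        by rw [card_SOf y.2.1, y.2.2]; omega⟩
      left_inv := fun x => Subtype.ext (SOf_toPart ((myIndep_iff x.1).mp x.2.1))
      right_inv := fun y => Subtype.ext (toPart_SOf y.2.1 (SOf_indep y.2.1)) }
  · rw [if_neg hk]
    have hemp : {s : Finset _ | (hatGraph G).IsIndepFinset s ∧ s.card = k} = ∅ := by
      ext S
      simp only [Set.mem_setOf_eq, Set.mem_empty_iff_false, iff_false]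
      rintro ⟨hind, hcard⟩
      have := card_le_n ((myIndep_iff S).mp hind)
      omega
    unfold numIndepSets
    rw [hemp, Set.ncard_empty]
end

section
/- Let G be a graph with vertices ordered u_1,…,u_n and suppose e = (u_{n-1}, u_n) is an edge of G. Then the graph constructed from G − e (with the induced vertex ordering) is a subgraph of the graph Ĝ constructed from G. -/
open Polynomial

/-- if `e` is the edge between the last two vertices of `G`, then the graph
constructed from `G - e` is a subgraph of the graph `Ĝ` constructed from `G`. -/
theorem stmt5 {n : ℕ} (G : SimpleGraph (Fin (n + 2)))
    (he : G.Adj (Fin.last n).castSucc (Fin.last (n + 1)))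
    (p q : Fin (n + 2) × Fin (n + 2))
    (hp : p.1 < p.2 ∧
      (G.deleteEdges {s((Fin.last n).castSucc, Fin.last (n + 1))}).Adj p.1 p.2)
    (hq : q.1 < q.2 ∧
      (G.deleteEdges {s((Fin.last n).castSucc, Fin.last (n + 1))}).Adj q.1 q.2)
    (hadj : (hatGraph (G.deleteEdges {s((Fin.last n).castSucc, Fin.last (n + 1))})).Adj
      ⟨p, hp⟩ ⟨q, hq⟩) :
    (hatGraph G).Adj
      ⟨p, hp.1, (SimpleGraph.deleteEdges_adj.mp hp.2).1⟩
      ⟨q, hq.1, (SimpleGraph.deleteEdges_adj.mp hq.2).1⟩ := by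
  obtain ⟨hne, hrel⟩ := hadj
  have key : ∀ a b : Fin (n + 2) × Fin (n + 2), a.1 < Fin.last (n + 1) →
      b.1 < Fin.last (n + 1) →
      hatRel (G.deleteEdges {s((Fin.last n).castSucc, Fin.last (n + 1))}) a b →
      hatRel G a b := by
    rintro a b ha hb ⟨hle, h⟩
    refine ⟨hle, ?_⟩
    rcases h with h | h | ⟨heq, hnadj⟩
    · exact Or.inl h
    · exact Or.inr (Or.inl h)
    · refine Or.inr (Or.inr ⟨heq, fun hG => hnadj ?_⟩)
      rw [SimpleGraph.deleteEdges_adj]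
      refine ⟨hG, ?_⟩
      simp only [Set.mem_singleton_iff, Sym2.eq_iff]
      rintro (⟨h1, h2⟩ | ⟨h1, h2⟩)
      · exact absurd h2 (by simpa using hb.ne)
      · exact absurd h1 (by simpa using ha.ne)
  have ha : p.1 < Fin.last (n + 1) := lt_of_lt_of_le hp.1 (Fin.le_last _)
  have hb : q.1 < Fin.last (n + 1) := lt_of_lt_of_le hq.1 (Fin.le_last _)
  refine ⟨fun h => hne (by simpa using Subtype.ext_iff.mp h), ?_⟩
  rcases hrel with h | h
  · exact Or.inl (key p q ha hb h)
  · exact Or.inr (key q p hb ha h)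
end

section
/- Let G be a connected graph. Then the independence polynomial I(G,x) has a zero in the real interval (0,1]. -/
open Polynomial

section StmtTen

open Finset

variable {V : Type*} (G : SimpleGraph V)

open Classical in
/-- Partial independence polynomial over subsets of `A`, evaluated at `x` with sign built in. -/
noncomputable def auxFpol (A : Finset V) (x : ℝ) : ℝ :=
  ∑ S ∈ A.powerset, if G.IsIndepFinset S then (-x) ^ S.card else 0

lemma indep_empty : G.IsIndepFinset (∅ : Finset V) :=
  fun a ha => absurd ha (Finset.notMem_empty a)

lemma auxFpol_empty (x : ℝ) : auxFpol G ∅ x = 1 := by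
  simp [auxFpol, indep_empty]

lemma auxFpol_zero (A : Finset V) : auxFpol G A 0 = 1 := by
  classical
  unfold auxFpol
  rw [Finset.sum_eq_single (∅ : Finset V)]
  · simp [indep_empty]
  · intro S _ hS
    have : S.card ≠ 0 := by simpa [Finset.card_eq_zero] using hS
    by_cases h : G.IsIndepFinset S <;> simp [h, this]
  · intro h
    simp [Finset.empty_mem_powerset] at h

lemma auxFpol_continuous (A : Finset V) : Continuous (fun x => auxFpol G A x) := by
  unfold auxFpol
  apply continuous_finset_sum
  intro S _
  by_cases h : G.IsIndepFinset S
  · simp only [if_pos h]; fun_prop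
  · simp only [if_neg h]; fun_prop

lemma indep_insert {v : V} {T : Finset V} [DecidableEq V] (hvT : v ∉ T) :
    G.IsIndepFinset (insert v T) ↔ G.IsIndepFinset T ∧ ∀ w ∈ T, ¬ G.Adj v w := by
  constructor
  · intro h
    exact ⟨fun a ha b hb => h a (mem_insert_of_mem ha) b (mem_insert_of_mem hb),
      fun w hw => h v (mem_insert_self _ _) w (mem_insert_of_mem hw)⟩
  · rintro ⟨h1, h2⟩ a ha b hb
    rcases mem_insert.mp ha with rfl | ha' <;> rcases mem_insert.mp hb with rfl | hb'
    · exact G.loopless.irrefl _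
    · exact h2 b hb'
    · intro had; exact h2 a ha' had.symm
    · exact h1 a ha' b hb'

open Classical in
lemma auxFpol_rec [DecidableEq V] {A : Finset V} {v : V} (hv : v ∈ A) (x : ℝ) :
    auxFpol G A x = auxFpol G (A.erase v) x
      + (-x) * auxFpol G ((A.erase v).filter (fun w => ¬ G.Adj v w)) x := by
  classical
  set B := (A.erase v).filter (fun w => ¬ G.Adj v w) with hB
  have hBsub : B ⊆ A.erase v := filter_subset _ _
  have hvA' : v ∉ A.erase v := notMem_erase v A
  have hA : A = insert v (A.erase v) := (insert_erase hv).symm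
  unfold auxFpol
  conv_lhs => rw [hA]
  rw [Finset.sum_powerset_insert hvA']
  congr 1
  have step1 : ∀ T ∈ (A.erase v).powerset,
      (if G.IsIndepFinset (insert v T) then (-x) ^ (insert v T).card else 0)
        = if T ⊆ B then (if G.IsIndepFinset T then (-x) ^ (T.card + 1) else 0) else 0 := by
    intro T hT
    rw [mem_powerset] at hT
    have hvT : v ∉ T := fun h => hvA' (hT h)
    have hcard : (insert v T).card = T.card + 1 := card_insert_of_notMem hvT
    have hiff : G.IsIndepFinset (insert v T) ↔ G.IsIndepFinset T ∧ T ⊆ B := by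
      rw [indep_insert G hvT]
      constructor
      · rintro ⟨h1, h2⟩
        exact ⟨h1, fun w hw => mem_filter.mpr ⟨hT hw, h2 w hw⟩⟩
      · rintro ⟨h1, h2⟩
        exact ⟨h1, fun w hw => (mem_filter.mp (h2 hw)).2⟩
    by_cases hTB : T ⊆ B <;> by_cases hI : G.IsIndepFinset T
    · rw [if_pos (hiff.mpr ⟨hI, hTB⟩), hcard, if_pos hTB, if_pos hI]
    · rw [if_neg (fun h => hI (hiff.mp h).1), if_pos hTB, if_neg hI]
    · rw [if_neg (fun h => hTB (hiff.mp h).2), if_neg hTB]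
    · rw [if_neg (fun h => hI (hiff.mp h).1), if_neg hTB]
  rw [Finset.sum_congr rfl step1, ← Finset.sum_filter]
  have hpow : (A.erase v).powerset.filter (fun T => T ⊆ B) = B.powerset := by
    ext T
    simp only [mem_filter, mem_powerset]
    exact ⟨fun h => h.2, fun h => ⟨h.trans hBsub, h⟩⟩
  rw [hpow, Finset.mul_sum]
  apply Finset.sum_congr rfl
  intro T _
  by_cases hI : G.IsIndepFinset T
  · rw [if_pos hI, if_pos hI, pow_succ, mul_comm]
  · rw [if_neg hI, if_neg hI, mul_zero]

/-- `b` is the least positive root of `auxFpol G A`, and lies in `(0,1]`. -/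
def auxLR (A : Finset V) (b : ℝ) : Prop :=
  b ∈ Set.Ioc (0 : ℝ) 1 ∧ auxFpol G A b = 0 ∧ ∀ y, 0 < y → auxFpol G A y = 0 → b ≤ y

lemma auxLR_pos {A : Finset V} {b : ℝ} (h : auxLR G A b) {y : ℝ} (hy0 : 0 ≤ y) (hyb : y < b) :
    0 < auxFpol G A y := by
  by_contra hle
  push_neg at hle
  rcases eq_or_lt_of_le hy0 with rfl | hy0'
  · rw [auxFpol_zero] at hle; linarith
  rcases eq_or_lt_of_le hle with heq | hlt
  · exact absurd (h.2.2 y hy0' heq) (not_le.mpr hyb)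
  · have hc : ContinuousOn (fun x => auxFpol G A x) (Set.Icc 0 y) :=
      (auxFpol_continuous G A).continuousOn
    have h0 : (0:ℝ) ∈ Set.Ico (auxFpol G A y) (auxFpol G A 0) := by
      rw [auxFpol_zero]; exact ⟨le_of_lt hlt, one_pos⟩
    obtain ⟨z, hz, hz0⟩ := intermediate_value_Ioc' (le_of_lt hy0') hc h0
    exact absurd (h.2.2 z hz.1 hz0) (not_le.mpr (lt_of_le_of_lt hz.2 hyb))

open Classical in
lemma auxMain [DecidableEq V] :
    ∀ n (A : Finset V), A.card ≤ n → A.Nonempty →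
      ∃ b, auxLR G A b ∧ ∀ B ⊆ A, B.Nonempty → ∀ c, auxLR G B c → b ≤ c := by
  classical
  intro n
  induction n with
  | zero =>
    intro A hcard hA
    rw [Nat.le_zero, Finset.card_eq_zero] at hcard
    subst hcard
    exact absurd hA (by simp)
  | succ n ih =>
    intro A hcard hA
    -- inner claim: a root of `auxFpol G A` at most the least root of `A.erase v`
    have inner : ∀ v ∈ A, (A.erase v).Nonempty → ∀ b', auxLR G (A.erase v) b' →
        ∃ r, r ∈ Set.Ioc (0:ℝ) b' ∧ auxFpol G A r = 0 := by
      intro v hv hne b' hb'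
      set B := (A.erase v).filter (fun w => ¬ G.Adj v w) with hBdef
      have hecard : (A.erase v).card ≤ n := by
        rw [card_erase_of_mem hv]
        omega
      have hFBnonneg : 0 ≤ auxFpol G B b' := by
        rcases B.eq_empty_or_nonempty with h | h
        · rw [h, auxFpol_empty]; norm_num
        · have hBcard : B.card ≤ n :=
            le_trans (card_le_card (filter_subset _ _)) hecard
          obtain ⟨c, hc, _⟩ := ih B hBcard h
          obtain ⟨b'', hb'', hmono⟩ := ih (A.erase v) hecard hne
          have heq : b'' = b' :=
            le_antisymm (hb''.2.2 b' hb'.1.1 hb'.2.1) (hb'.2.2 b'' hb''.1.1 hb''.2.1)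
          have hble : b' ≤ c := heq ▸ hmono B (filter_subset _ _) h c hc
          rcases eq_or_lt_of_le hble with heq2 | hlt2
          · rw [← heq2] at hc; exact le_of_eq hc.2.1.symm
          · exact le_of_lt (auxLR_pos G hc (le_of_lt hb'.1.1) hlt2)
      have hFA_le : auxFpol G A b' ≤ 0 := by
        rw [auxFpol_rec G hv, hb'.2.1, zero_add]
        have := hb'.1.1
        nlinarith
      have hc : ContinuousOn (fun x => auxFpol G A x) (Set.Icc 0 b') :=
        (auxFpol_continuous G A).continuousOn
      have h0 : (0:ℝ) ∈ Set.Ico (auxFpol G A b') (auxFpol G A 0) := by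
        rw [auxFpol_zero]; exact ⟨hFA_le, one_pos⟩
      obtain ⟨r, hr, hr0⟩ := intermediate_value_Ioc' (le_of_lt hb'.1.1) hc h0
      exact ⟨r, hr, hr0⟩
    obtain ⟨v, hv⟩ := hA
    rcases (A.erase v).eq_empty_or_nonempty with hempty | hne
    · -- A = {v}
      have hAv : A = {v} := by
        apply Finset.eq_singleton_iff_unique_mem.mpr
        refine ⟨hv, fun w hw => ?_⟩
        by_contra hwv
        exact absurd (Finset.mem_erase.mpr ⟨hwv, hw⟩) (by rw [hempty]; simp)
      have hsing : ∀ x : ℝ, auxFpol G A x = 1 - x := by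
        intro x
        have hpow : A.powerset = {∅, A} := by
          rw [hAv]; ext S; simp [Finset.subset_singleton_iff]
        have h2 : G.IsIndepFinset A := by
          intro a ha b hb
          rw [hAv, Finset.mem_singleton] at ha hb
          subst ha; subst hb; exact G.loopless.irrefl _
        have hAne : (∅ : Finset V) ≠ A := by
          rw [hAv]; exact (Finset.singleton_ne_empty v).symm
        have h2' : G.IsIndepFinset ({v} : Finset V) := hAv ▸ h2
        rw [auxFpol, hpow, Finset.sum_insert (by simp [hAne])]
        simp [indep_empty, h2', hAv]
        ring
      refine ⟨1, ⟨⟨one_pos, le_refl 1⟩, by rw [hsing]; ring, fun y hy hroot => ?_⟩, ?_⟩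
      · rw [hsing] at hroot; linarith
      · intro B hB hBne c hc
        have hBA : B = A := by
          rw [hAv] at hB ⊢
          rcases Finset.subset_singleton_iff.mp hB with rfl | rfl
          · exact absurd hBne (by simp)
          · rfl
        subst hBA
        have := hc.2.1
        rw [hsing] at this
        linarith
    · -- erase nonempty: use inner to get a root, then take the infimum of roots
      obtain ⟨b', hb', _⟩ := ih (A.erase v) (by rw [card_erase_of_mem hv]; omega) hne
      obtain ⟨r, hr, hr0⟩ := inner v hv hne b' hb'
      set Z : Set ℝ := {x | 0 ≤ x ∧ x ≤ r ∧ auxFpol G A x = 0} with hZdef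
      have hZclosed : IsClosed Z := by
        have : Z = Set.Icc 0 r ∩ (fun x => auxFpol G A x) ⁻¹' {0} := by
          ext x; simp [hZdef, Set.mem_Icc, and_assoc]
        rw [this]
        exact isClosed_Icc.inter (isClosed_singleton.preimage (auxFpol_continuous G A))
      have hZne : Z.Nonempty := ⟨r, le_of_lt hr.1, le_refl r, hr0⟩
      have hZbdd : BddBelow Z := ⟨0, fun x hx => hx.1⟩
      set b := sInf Z with hbdef
      have hbZ : b ∈ Z := hZclosed.csInf_mem hZne hZbdd
      have hb0 : 0 < b := by
        rcases eq_or_lt_of_le hbZ.1 with heq | h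
        · exfalso
          have := hbZ.2.2
          rw [← heq, auxFpol_zero] at this
          linarith
        · exact h
      have hbleast : ∀ y, 0 < y → auxFpol G A y = 0 → b ≤ y := by
        intro y hy hroot
        by_contra hlt
        push_neg at hlt
        have hyZ : y ∈ Z := ⟨le_of_lt hy, le_trans (le_of_lt hlt) hbZ.2.1, hroot⟩
        exact absurd (csInf_le hZbdd hyZ) (not_le.mpr hlt)
      have hb1 : b ≤ 1 := le_trans hbZ.2.1 (le_trans hr.2 hb'.1.2)
      refine ⟨b, ⟨⟨hb0, hb1⟩, hbZ.2.2, hbleast⟩, ?_⟩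
      intro B hB hBne c hc
      rcases eq_or_ne B A with rfl | hne2
      · exact hbleast c hc.1.1 hc.2.1
      · obtain ⟨w, hwA, hwB⟩ := Finset.exists_of_ssubset (lt_of_le_of_ne hB hne2)
        have hBsub : B ⊆ A.erase w := fun x hx =>
          Finset.mem_erase.mpr ⟨fun h => hwB (h ▸ hx), hB hx⟩
        have hwne : (A.erase w).Nonempty := hBne.mono hBsub
        obtain ⟨b2, hb2, hmono2⟩ := ih (A.erase w) (by rw [card_erase_of_mem hwA]; omega) hwne
        obtain ⟨r2, hr2, hr20⟩ := inner w hwA hwne b2 hb2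
        calc b ≤ r2 := hbleast r2 hr2.1 hr20
        _ ≤ b2 := hr2.2
        _ ≤ c := hmono2 B hBsub hBne c hc

end StmtTen

section Eval
open Finset
variable {V : Type*} [Fintype V] (G : SimpleGraph V)

lemma eval_indepPoly (x : ℝ) : (indepPoly G).eval x = auxFpol G Finset.univ x := by
  classical
  have hcount : ∀ k, (numIndepSets G k : ℝ) =
      (((Finset.univ : Finset (Finset V)).filter
        (fun s : Finset V => G.IsIndepFinset s ∧ s.card = k)).card : ℝ) := by
    intro k
    congr 1
    unfold numIndepSets
    rw [show {s : Finset V | G.IsIndepFinset s ∧ s.card = k}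
        = ↑((Finset.univ : Finset (Finset V)).filter
            (fun s : Finset V => G.IsIndepFinset s ∧ s.card = k)) by
      ext s; simp]
    exact Set.ncard_coe_finset _
  unfold indepPoly
  rw [eval_finset_sum]
  simp only [eval_mul, eval_C, eval_pow, eval_X]
  have step : ∀ k, (-1:ℝ)^k * (numIndepSets G k : ℝ) * x^k
      = ∑ s ∈ ((Finset.univ : Finset (Finset V)).filter
          (fun s : Finset V => G.IsIndepFinset s)).filter (fun s => s.card = k),
          (-x)^s.card := by
    intro k
    rw [Finset.filter_filter]
    have h1 : ∀ s ∈ (Finset.univ : Finset (Finset V)).filter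
        (fun s : Finset V => G.IsIndepFinset s ∧ s.card = k),
        ((-x : ℝ))^s.card = (-1:ℝ)^k * x^k := by
      intro s hs
      rw [(Finset.mem_filter.mp hs).2.2, neg_pow]
    rw [Finset.sum_congr rfl h1, Finset.sum_const, nsmul_eq_mul, hcount k]
    ring
  rw [Finset.sum_congr rfl (fun k _ => step k)]
  rw [Finset.sum_fiberwise_of_maps_to (fun s _ => Finset.mem_range.mpr
    (Nat.lt_succ_of_le (by simpa using s.card_le_univ)))]
  unfold auxFpol
  rw [Finset.powerset_univ, ← Finset.sum_filter]

end Eval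

/-- for connected `G`, the independence polynomial `I(G,x)` has a zero in
`(0,1]`. -/
theorem stmt10 {V : Type*} [Fintype V] (G : SimpleGraph V) (hc : G.Connected) :
    ∃ x ∈ Set.Ioc (0 : ℝ) 1, (indepPoly G).eval x = 0 := by
  classical
  have hne : Nonempty V := hc.nonempty
  obtain ⟨b, hb, -⟩ := auxMain G (Fintype.card V) Finset.univ (by simp) Finset.univ_nonempty
  exact ⟨b, hb.1, by rw [eval_indepPoly]; exact hb.2.1⟩
end

section
/- Let G be a connected graph and let β(G) be the smallest real zero of I(G,x) in (0,1]. Then β(G) is a simple zero of I(G,x), and every complex zero ξ ≠ β(G) of I(G,x) satisfies |ξ| > β(G). -/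
open Polynomial

namespace Stmt11Aux

open Finset
open scoped Classical
set_option linter.unusedSectionVars false

variable {V : Type*} [Fintype V]

lemma indep_mono {G : SimpleGraph V} {s t : Finset V} (hst : s ⊆ t)
    (ht : G.IsIndepFinset t) : G.IsIndepFinset s :=
  fun v hv w hw => ht v (hst hv) w (hst hw)

noncomputable def iSets (G : SimpleGraph V) (S : Finset V) : Finset (Finset V) :=
  S.powerset.filter (fun s => G.IsIndepFinset s)

lemma mem_iSets {G : SimpleGraph V} {S s : Finset V} :
    s ∈ iSets G S ↔ s ⊆ S ∧ G.IsIndepFinset s := by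
  classical
  simp [iSets, Finset.mem_filter, Finset.mem_powerset]

lemma empty_mem_iSets (G : SimpleGraph V) (S : Finset V) : ∅ ∈ iSets G S :=
  mem_iSets.2 ⟨Finset.empty_subset _, fun v hv => absurd hv (Finset.notMem_empty v)⟩

noncomputable def rem (G : SimpleGraph V) (S : Finset V) (v : V) : Finset V :=
  (S.erase v).filter (fun u => ¬ G.Adj v u)

lemma mem_rem {G : SimpleGraph V} {S : Finset V} {v u : V} :
    u ∈ rem G S v ↔ (u ∈ S ∧ u ≠ v ∧ ¬ G.Adj v u) := by
  classical
  simp [rem, Finset.mem_filter, Finset.mem_erase]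
  tauto

lemma rem_subset_erase {G : SimpleGraph V} {S : Finset V} {v : V} :
    rem G S v ⊆ S.erase v := fun u hu =>
  Finset.mem_erase.2 ⟨(mem_rem.1 hu).2.1, (mem_rem.1 hu).1⟩

lemma rem_subset {G : SimpleGraph V} {S : Finset V} {v : V} : rem G S v ⊆ S :=
  rem_subset_erase.trans (Finset.erase_subset _ _)

lemma not_mem_rem {G : SimpleGraph V} {S : Finset V} {v : V} : v ∉ rem G S v :=
  fun h => (mem_rem.1 h).2.1 rfl

noncomputable def zs (G : SimpleGraph V) {R : Type*} [CommRing R] (S : Finset V) (x : R) : R :=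
  ∑ s ∈ iSets G S, x ^ s.card

lemma zs_empty (G : SimpleGraph V) {R : Type*} [CommRing R] (x : R) : zs G ∅ x = 1 := by
  classical
  have h : iSets G ∅ = {∅} := by
    ext s
    simp only [mem_iSets, Finset.mem_singleton, Finset.subset_empty]
    constructor
    · rintro ⟨rfl, -⟩; rfl
    · rintro rfl; exact ⟨rfl, fun v hv => absurd hv (Finset.notMem_empty v)⟩
  simp [zs, h]

lemma zs_zero (G : SimpleGraph V) {R : Type*} [CommRing R] (S : Finset V) : zs G S (0 : R) = 1 := by
  classical
  rw [zs, Finset.sum_eq_single_of_mem ∅ (empty_mem_iSets G S)]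
  · simp
  · intro s _ hs
    exact zero_pow (by simpa [Finset.card_eq_zero] using hs)

/-- Key bijection: independent sets containing `v` correspond to independent subsets of
`rem G S v` via erase/insert. -/
lemma sum_insert_erase (G : SimpleGraph V) {S : Finset V} {v : V} (hv : v ∈ S)
    {R : Type*} [AddCommMonoid R] (F : Finset V → R) :
    ∑ s ∈ (iSets G S).filter (fun s => v ∈ s), F s =
      ∑ t ∈ iSets G (rem G S v), F (insert v t) := by
  classical
  refine Finset.sum_nbij' (fun s => s.erase v) (fun t => insert v t) ?_ ?_ ?_ ?_ ?_
  · intro s hs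
    rw [Finset.mem_filter] at hs
    obtain ⟨hs, hvs⟩ := hs
    rw [mem_iSets] at hs ⊢
    refine ⟨fun u hu => ?_, indep_mono (Finset.erase_subset _ _) hs.2⟩
    rw [Finset.mem_erase] at hu
    exact mem_rem.2 ⟨hs.1 hu.2, hu.1, hs.2 v hvs u hu.2⟩
  · intro t ht
    rw [mem_iSets] at ht
    have hvt : v ∉ t := fun h => not_mem_rem (ht.1 h)
    rw [Finset.mem_filter, mem_iSets]
    refine ⟨⟨Finset.insert_subset hv (ht.1.trans rem_subset), ?_⟩, Finset.mem_insert_self _ _⟩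
    intro a ha c hc
    rw [Finset.mem_insert] at ha hc
    rcases ha with rfl | ha
    · rcases hc with rfl | hc
      · exact G.irrefl
      · exact (mem_rem.1 (ht.1 hc)).2.2
    · rcases hc with rfl | hc
      · exact fun hadj => (mem_rem.1 (ht.1 ha)).2.2 hadj.symm
      · exact ht.2 a ha c hc
  · intro s hs
    rw [Finset.mem_filter] at hs
    exact Finset.insert_erase hs.2
  · intro t ht
    rw [mem_iSets] at ht
    exact Finset.erase_insert (fun h => not_mem_rem (ht.1 h))
  · intro s hs
    rw [Finset.mem_filter] at hs
    rw [Finset.insert_erase hs.2]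

/-- The deletion recurrence. -/
lemma zs_rec (G : SimpleGraph V) {S : Finset V} {v : V} (hv : v ∈ S)
    {R : Type*} [CommRing R] (x : R) :
    zs G S x = zs G (S.erase v) x + x * zs G (rem G S v) x := by
  classical
  have hsplit : zs G S x =
      (∑ s ∈ (iSets G S).filter (fun s => v ∉ s), x ^ s.card) +
      (∑ s ∈ (iSets G S).filter (fun s => v ∈ s), x ^ s.card) := by
    rw [zs, ← Finset.sum_filter_add_sum_filter_not (iSets G S) (fun s => v ∈ s)]
    ring
  rw [hsplit]
  congr 1
  · have : (iSets G S).filter (fun s => v ∉ s)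
        = iSets G (S.erase v) := by
      ext s
      simp only [Finset.mem_filter, mem_iSets, Finset.subset_erase]
      tauto
    rw [this, zs]
  · rw [sum_insert_erase G hv]
    rw [zs, Finset.mul_sum]
    refine Finset.sum_congr rfl fun t ht => ?_
    rw [mem_iSets] at ht
    have hvt : v ∉ t := fun h => not_mem_rem (ht.1 h)
    rw [Finset.card_insert_of_notMem hvt, pow_succ]
    ring

lemma map_zs {G : SimpleGraph V} {R R' : Type*} [CommRing R] [CommRing R'] (φ : R →+* R')
    (S : Finset V) (x : R) : φ (zs G S x) = zs G S (φ x) := by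
  simp [zs, map_sum, map_pow]


lemma numIndepSets_eq (G : SimpleGraph V) (k : ℕ) :
    numIndepSets G k = ((iSets G univ).filter (fun s => s.card = k)).card := by
  classical
  have h : {s : Finset V | G.IsIndepFinset s ∧ s.card = k}
      = ↑((iSets G univ).filter (fun s => s.card = k)) := by
    ext s
    simp [mem_iSets, Finset.mem_filter]
  rw [numIndepSets, h, Set.ncard_coe_finset]

lemma eval₂_indepPoly (G : SimpleGraph V) {R : Type*} [CommRing R] (φ : ℝ →+* R) (x : R) :
    eval₂ φ x (indepPoly G) = zs G univ (-x) := by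
  classical
  rw [indepPoly, Polynomial.eval₂_finset_sum]
  have h1 : ∀ k ∈ Finset.range (Fintype.card V + 1),
      eval₂ φ x (C ((-1 : ℝ) ^ k * (numIndepSets G k : ℝ)) * X ^ k)
        = ((((iSets G univ).filter (fun s => s.card = k)).card : R)) * (-x) ^ k := by
    intro k _
    rw [Polynomial.eval₂_mul, Polynomial.eval₂_C, Polynomial.eval₂_X_pow]
    rw [map_mul, map_pow, map_neg, map_one, map_natCast, numIndepSets_eq G k]
    rw [neg_pow x k]
    ring
  rw [Finset.sum_congr rfl h1, zs]
  rw [← Finset.sum_fiberwise_of_maps_to (g := fun s : Finset V => s.card)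
      (t := Finset.range (Fintype.card V + 1))
      (fun s _ => by
        rw [Finset.mem_range, Nat.lt_succ_iff]
        exact (Finset.card_le_univ s).trans_eq Finset.card_univ)
      (fun s => (-x) ^ s.card)]
  refine Finset.sum_congr rfl fun k _ => ?_
  rw [Finset.sum_congr rfl (fun s hs => by rw [(Finset.mem_filter.1 hs).2]),
    Finset.sum_const, nsmul_eq_mul]

lemma eval_indepPoly (G : SimpleGraph V) (y : ℝ) :
    (indepPoly G).eval y = zs G univ (-y) := by
  have h := eval₂_indepPoly G (RingHom.id ℝ) y
  exact h

lemma aeval_indepPoly (G : SimpleGraph V) (x : ℂ) :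
    Polynomial.aeval x (indepPoly G) = zs G univ (-x) := by
  rw [Polynomial.aeval_def, eval₂_indepPoly]

lemma cont_zs (G : SimpleGraph V) (S : Finset V) : Continuous (fun y : ℝ => zs G S (-y)) := by
  unfold zs
  exact continuous_finset_sum _ fun s _ => (continuous_id.neg).pow _

lemma pos_limit {f : ℝ → ℝ} (hf : Continuous f) {c : ℝ} (hc : 0 < c)
    (h : ∀ z, 0 ≤ z → z < c → 0 < f z) : 0 ≤ f c := by
  have htend : Filter.Tendsto f (nhdsWithin c (Set.Iio c)) (nhds (f c)) :=
    (hf.continuousAt).continuousWithinAt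
  refine ge_of_tendsto htend ?_
  filter_upwards [Ioo_mem_nhdsLT_of_mem (show c ∈ Set.Ioc (0:ℝ) c from ⟨hc, le_refl c⟩)]
    with z hz
  exact (h z (le_of_lt hz.1) hz.2).le

/-- Lemma W: positivity on `[0,y]` passes to all induced sub-vertex-sets. -/
lemma posW (G : SimpleGraph V) : ∀ (n : ℕ) (S : Finset V), S.card ≤ n → ∀ y : ℝ, 0 ≤ y →
    (∀ z, 0 ≤ z → z ≤ y → 0 < zs G S (-z)) →
    ∀ T ⊆ S, ∀ z, 0 ≤ z → z ≤ y → 0 < zs G T (-z) := by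
  classical
  intro n
  induction n with
  | zero =>
    intro S hS y _ _ T hT z _ _
    have hSe : S = ∅ := Finset.card_eq_zero.1 (le_antisymm hS (Nat.zero_le _))
    subst hSe
    rw [Finset.subset_empty.1 hT, zs_empty]
    norm_num
  | succ n ih =>
    intro S hS y hy hpos T hT z hz hzy
    by_cases hTS : T = S
    · subst hTS; exact hpos z hz hzy
    · obtain ⟨v, hvS, hvT⟩ : ∃ v ∈ S, v ∉ T := by
        by_contra hcon
        push_neg at hcon
        exact hTS (Finset.Subset.antisymm hT hcon)
      have hcard : (S.erase v).card ≤ n := by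
        have h1 := Finset.card_erase_of_mem hvS
        have h2 : 1 ≤ S.card := Finset.card_pos.2 ⟨v, hvS⟩
        omega
      have herase : ∀ z, 0 ≤ z → z ≤ y → 0 < zs G (S.erase v) (-z) := by
        by_contra hcon
        push_neg at hcon
        obtain ⟨z₀, hz₀, hz₀y, hz₀le⟩ := hcon
        set f : ℝ → ℝ := fun z => zs G (S.erase v) (-z) with hf
        set A := Set.Icc (0:ℝ) y ∩ f ⁻¹' (Set.Iic 0) with hA
        have hAne : A.Nonempty := ⟨z₀, ⟨hz₀, hz₀y⟩, hz₀le⟩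
        have hAcl : IsClosed A := isClosed_Icc.inter (isClosed_Iic.preimage (cont_zs G _))
        have hAbd : BddBelow A := ⟨0, fun x hx => hx.1.1⟩
        have hcA : sInf A ∈ A := hAcl.csInf_mem hAne hAbd
        set c := sInf A with hcdef
        obtain ⟨⟨hc0', hcy⟩, hcle⟩ := hcA
        have hfc : f c ≤ 0 := hcle
        have hc0 : 0 < c := by
          rcases lt_or_eq_of_le hc0' with h | h
          · exact h
          · exfalso
            have : f 0 ≤ 0 := by rwa [← h] at hfc
            rw [hf] at this
            simp only [neg_zero, zs_zero] at this
            linarith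
        have hlt : ∀ w, 0 ≤ w → w < c → 0 < f w := by
          intro w hw0 hwc
          by_contra hwle
          push_neg at hwle
          have : w ∈ A := ⟨⟨hw0, hwc.le.trans hcy⟩, hwle⟩
          exact absurd (csInf_le hAbd this) (not_le.2 hwc)
        have hrem : 0 ≤ zs G (rem G S v) (-c) := by
          refine pos_limit (cont_zs G _) hc0 ?_
          intro w hw0 hwc
          exact ih (S.erase v) hcard w hw0
            (fun z' hz' hz'w => hlt z' hz' (lt_of_le_of_lt hz'w hwc))
            (rem G S v) rem_subset_erase w hw0 le_rfl
        have hrec := zs_rec G hvS (-c) (R := ℝ)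
        have hSc : 0 < zs G S (-c) := hpos c hc0.le hcy
        have : 0 < f c := by
          rw [hf]
          simp only
          nlinarith [hrec, hrem, hSc, hc0]
        linarith [this, hfc]
      exact ih (S.erase v) hcard y hy herase T (Finset.subset_erase.2 ⟨hT, hvT⟩) z hz hzy


section Beta

variable {G : SimpleGraph V} {b : ℝ}

lemma posUniv (hb : IsBetaZero (indepPoly G) b) :
    ∀ z, 0 ≤ z → z < b → 0 < zs G univ (-z) := by
  obtain ⟨⟨hb0, hb1⟩, hbe, hbmin⟩ := hb
  intro z hz hzb
  by_contra hle
  push_neg at hle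
  have hcont : ContinuousOn (fun y : ℝ => zs G univ (-y)) (Set.Icc 0 z) :=
    (cont_zs G univ).continuousOn
  have h0 : zs G univ (-(0:ℝ)) = 1 := by rw [neg_zero, zs_zero]
  have hmem : (0:ℝ) ∈ Set.Icc (zs G univ (-z)) (zs G univ (-(0:ℝ))) :=
    ⟨hle, by rw [h0]; norm_num⟩
  obtain ⟨w, hw, hweq⟩ := intermediate_value_Icc' hz hcont hmem
  have hweq' : zs G univ (-w) = 0 := hweq
  have hw0 : w ≠ 0 := by
    intro h
    rw [h, h0] at hweq'
    norm_num at hweq'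
  have hble : b ≤ w := by
    refine hbmin w ⟨lt_of_le_of_ne hw.1 (Ne.symm hw0), ?_⟩ ?_
    · exact le_trans hw.2 (le_trans hzb.le hb1)
    · rw [eval_indepPoly]; exact hweq'
  linarith [hw.2]

lemma posT (hb : IsBetaZero (indepPoly G) b) (T : Finset V) :
    ∀ z, 0 ≤ z → z < b → 0 < zs G T (-z) := by
  intro z hz hzb
  refine posW G (Fintype.card V) univ (le_of_eq Finset.card_univ) z hz ?_ T
    (Finset.subset_univ T) z hz le_rfl
  intro z' h1 h2
  exact posUniv hb z' h1 (lt_of_le_of_lt h2 hzb)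

lemma nonnegTb (hb : IsBetaZero (indepPoly G) b) (T : Finset V) : 0 ≤ zs G T (-b) :=
  pos_limit (cont_zs G T) hb.1.1 (fun z h1 h2 => posT hb T z h1 h2)

lemma cross_walk {S : Finset V} : ∀ {a c : V}, G.Walk a c → a ∈ S → c ∉ S →
    ∃ u w, u ∉ S ∧ w ∈ S ∧ G.Adj u w := by
  intro a c p
  induction p with
  | nil => intro h1 h2; exact absurd h1 h2
  | @cons a a' c h q ih =>
    intro h1 h2
    by_cases ha' : a' ∈ S
    · exact ih ha' h2
    · exact ⟨a', a, ha', h1, h.symm⟩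

lemma cross (hp : G.Preconnected) {S : Finset V} (hS : S.Nonempty)
    (hSu : S ≠ univ) : ∃ u w, u ∉ S ∧ w ∈ S ∧ G.Adj u w := by
  obtain ⟨a, ha⟩ := hS
  obtain ⟨cV, hcV⟩ : ∃ c, c ∉ S := by
    by_contra h
    push_neg at h
    exact hSu (Finset.eq_univ_iff_forall.2 h)
  obtain ⟨p⟩ := hp a cV
  exact cross_walk p ha hcV

/-- Lemma Z: at `b`, the partial independence sums of proper subsets are strictly positive. -/
lemma posZ (hb : IsBetaZero (indepPoly G) b) (hc : G.Connected) :
    ∀ (n : ℕ) (S : Finset V), S.card ≤ n → S ≠ univ → 0 < zs G S (-b) := by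
  intro n
  induction n with
  | zero =>
    intro S hS _
    have hSe : S = ∅ := Finset.card_eq_zero.1 (le_antisymm hS (Nat.zero_le _))
    subst hSe
    rw [zs_empty]; norm_num
  | succ n ih =>
    intro S hS hSu
    rcases Finset.eq_empty_or_nonempty S with rfl | hSne
    · rw [zs_empty]; norm_num
    rcases lt_or_eq_of_le (nonnegTb hb S) with h | h
    · exact h
    exfalso
    obtain ⟨u, w, huS, hwS, hadj⟩ := cross hc.preconnected hSne hSu
    have hb0 : 0 < b := hb.1.1
    have hrec := zs_rec G (S := insert u S) (v := u) (Finset.mem_insert_self u S) (-b) (R := ℝ)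
    rw [Finset.erase_insert huS] at hrec
    have h1 : 0 ≤ zs G (insert u S) (-b) := nonnegTb hb _
    have h2 : 0 ≤ zs G (rem G (insert u S) u) (-b) := nonnegTb hb _
    have h4 : 0 ≤ -b * zs G (rem G (insert u S) u) (-b) := by
      rw [hrec, ← h] at h1
      linarith
    have h3 : zs G (rem G (insert u S) u) (-b) = 0 := by nlinarith
    have hremS : rem G (insert u S) u ⊆ S := by
      intro x hx
      obtain ⟨hx1, hx2, _⟩ := mem_rem.1 hx
      rcases Finset.mem_insert.1 hx1 with rfl | hxS
      · exact absurd rfl hx2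
      · exact hxS
    have hwnot : w ∉ rem G (insert u S) u := fun hmem => (mem_rem.1 hmem).2.2 hadj
    have hss : rem G (insert u S) u ⊂ S := ⟨hremS, fun hsub => hwnot (hsub hwS)⟩
    have hcard : (rem G (insert u S) u).card ≤ n := by
      have := Finset.card_lt_card hss
      omega
    have hne : rem G (insert u S) u ≠ univ := by
      intro he
      exact hSu (Finset.univ_subset_iff.1 (he ▸ hremS))
    have := ih _ hcard hne
    rw [h3] at this
    exact lt_irrefl _ this

/-- Strict positivity for proper subsets: combined form. -/
lemma posZ' (hb : IsBetaZero (indepPoly G) b) (hc : G.Connected)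
    {S : Finset V} (hSu : S ≠ univ) : 0 < zs G S (-b) :=
  posZ hb hc S.card S le_rfl hSu

end Beta


section Deriv

variable {G : SimpleGraph V} {b : ℝ}

lemma hasDeriv_zs (G : SimpleGraph V) (b : ℝ) : HasDerivAt (fun y : ℝ => zs G univ (-y))
    (∑ s ∈ iSets G univ, ((s.card : ℝ) * (-b) ^ (s.card - 1) * (-1))) b := by
  unfold zs
  exact HasDerivAt.fun_sum fun s _ => ((hasDerivAt_id b).neg).pow s.card

lemma deriv_identity (G : SimpleGraph V) (b : ℝ) :
    ∑ s ∈ iSets G univ, ((s.card : ℝ) * (-b) ^ (s.card - 1) * (-1))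
      = -∑ v : V, zs G (rem G univ v) (-b) := by
  classical
  have step1 : ∀ s ∈ iSets G univ, (s.card : ℝ) * (-b) ^ (s.card - 1) * (-1)
      = -∑ _v ∈ s, (-b) ^ (s.card - 1) := by
    intro s _
    rw [Finset.sum_const, nsmul_eq_mul]
    ring
  rw [Finset.sum_congr rfl step1]
  rw [Finset.sum_neg_distrib, neg_inj]
  have h1 : ∀ s ∈ iSets G univ, ∑ _v ∈ s, ((-b):ℝ) ^ (s.card - 1)
      = ∑ v : V, if v ∈ s then (-b) ^ (s.card - 1) else 0 := by
    intro s _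
    rw [Finset.sum_ite_mem, Finset.univ_inter]
  rw [Finset.sum_congr rfl h1, Finset.sum_comm]
  refine Finset.sum_congr rfl fun v _ => ?_
  rw [← Finset.sum_filter]
  rw [sum_insert_erase G (Finset.mem_univ v) (F := fun s => ((-b):ℝ) ^ (s.card - 1))]
  rw [zs]
  refine Finset.sum_congr rfl fun t ht => ?_
  have hvt : v ∉ t := fun hmem => not_mem_rem ((mem_iSets.1 ht).1 hmem)
  rw [Finset.card_insert_of_notMem hvt]
  simp

lemma deriv_indepPoly_neg (hb : IsBetaZero (indepPoly G) b) (hc : G.Connected) :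
    (indepPoly G).derivative.eval b < 0 := by
  haveI := hc.nonempty
  have hD : HasDerivAt (fun y : ℝ => (indepPoly G).eval y)
      (-∑ v : V, zs G (rem G univ v) (-b)) b := by
    have h1 := hasDeriv_zs G b
    rw [deriv_identity] at h1
    have hfun : (fun y : ℝ => (indepPoly G).eval y) = fun y => zs G univ (-y) :=
      funext (eval_indepPoly G)
    rw [hfun]
    exact h1
  have hd := hD.deriv
  rw [Polynomial.deriv] at hd
  rw [hd]
  have hpos : 0 < ∑ v : V, zs G (rem G univ v) (-b) := by
    refine Finset.sum_pos ?_ Finset.univ_nonempty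
    intro v _
    refine posZ' hb hc ?_
    intro he
    have hv : v ∈ rem G univ v := by rw [he]; exact Finset.mem_univ v
    exact not_mem_rem hv
  linarith

lemma mult_one (hb : IsBetaZero (indepPoly G) b) (hc : G.Connected) :
    (indepPoly G).rootMultiplicity b = 1 := by
  have hp0 : indepPoly G ≠ 0 := by
    intro h
    have heval := eval_indepPoly G 0
    rw [h] at heval
    rw [neg_zero, zs_zero] at heval
    norm_num at heval
  have hroot : (indepPoly G).IsRoot b := hb.2.1
  have hge : 1 ≤ rootMultiplicity b (indepPoly G) :=
    (Polynomial.rootMultiplicity_pos hp0).2 hroot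
  have hlt : rootMultiplicity b (indepPoly G) < 2 := by
    by_contra hcon
    push_neg at hcon
    have hdvd : (X - C b) ^ 2 ∣ indepPoly G :=
      dvd_trans (pow_dvd_pow _ hcon) (Polynomial.pow_rootMultiplicity_dvd _ b)
    obtain ⟨q, hq⟩ := hdvd
    have hz : (indepPoly G).derivative.eval b = 0 := by
      rw [hq]
      simp [Polynomial.derivative_mul, Polynomial.derivative_pow, Polynomial.eval_mul,
        Polynomial.eval_pow, Polynomial.eval_sub, Polynomial.eval_X, Polynomial.eval_C, sub_self]
    linarith [deriv_indepPoly_neg hb hc]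
  omega

end Deriv


section ComplexPart

variable {G : SimpleGraph V} {b : ℝ}

lemma abs_lower (x y : ℂ) : ‖x‖ - ‖y‖ ≤ ‖x + y‖ := by
  have h := norm_add_le (x + y) (-y)
  rw [add_neg_cancel_right, norm_neg] at h
  linarith

lemma one_add_abs_gt {lam : ℂ} (hb0 : 0 < b) (hb1 : b ≤ 1) (habs : ‖lam‖ ≤ b)
    (hne : lam ≠ -(b : ℂ)) : 1 - b < ‖1 + lam‖ := by
  by_contra hcon
  push_neg at hcon
  have habs' : b ≤ ‖lam‖ := by
    have h := abs_lower 1 lam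
    rw [norm_one] at h
    linarith
  have heq : ‖lam‖ = b := le_antisymm habs habs'
  have e1 : (‖1 + lam‖) ^ 2 = (1 + lam.re) ^ 2 + lam.im ^ 2 := by
    rw [Complex.sq_norm, Complex.normSq_apply]
    simp [Complex.add_re, Complex.add_im]
    ring
  have e2 : lam.re ^ 2 + lam.im ^ 2 = b ^ 2 := by
    rw [← heq, Complex.sq_norm, Complex.normSq_apply]
    ring
  have h1b : (0:ℝ) ≤ 1 - b := by linarith
  have hsq : (1 + lam.re) ^ 2 + lam.im ^ 2 ≤ (1 - b) ^ 2 := by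
    rw [← e1]
    exact pow_le_pow_left₀ (norm_nonneg _) hcon 2
  have hrele : lam.re ≤ -b := by nlinarith
  have hrege : -b ≤ lam.re := by
    have h := abs_le.1 ((Complex.abs_re_le_norm lam).trans_eq heq)
    exact h.1
  have hreeq : lam.re = -b := le_antisymm hrele hrege
  have him : lam.im = 0 := by nlinarith [sq_nonneg lam.im]
  apply hne
  apply Complex.ext
  · rw [hreeq]
    simp
  · rw [him]
    simp


/-- Main induction: strict ratio bounds for proper subsets at `|λ| ≤ b`, `λ ≠ -b`. -/
lemma mainInd (hb : IsBetaZero (indepPoly G) b) (hc : G.Connected) {lam : ℂ}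
    (habs : ‖lam‖ ≤ b) (hne : lam ≠ -(b : ℂ)) :
    ∀ (n : ℕ) (S : Finset V), S.card ≤ n → S ≠ univ →
      0 < ‖zs G S lam‖ ∧
      ∀ T ⊆ S, T ≠ S →
        zs G S (-b) * ‖zs G T lam‖ < zs G T (-b) * ‖zs G S lam‖ := by
  have hb0 : 0 < b := hb.1.1
  have hb1 : b ≤ 1 := hb.1.2
  intro n
  induction n with
  | zero =>
    intro S hS _
    have hSe : S = ∅ := Finset.card_eq_zero.1 (le_antisymm hS (Nat.zero_le _))
    subst hSe
    constructor
    · rw [zs_empty]; simp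
    · intro T hT hTne
      exact absurd (Finset.subset_empty.1 hT) hTne
  | succ n ih =>
    intro S hS hSu
    have hzrS : 0 < zs G S (-b) := posZ' hb hc hSu
    -- the single-vertex step
    have step : ∀ v ∈ S, zs G S (-b) * ‖zs G (S.erase v) lam‖
        < zs G (S.erase v) (-b) * ‖zs G S lam‖ := by
      intro v hv
      have hS'card : (S.erase v).card ≤ n := by
        have h1 := Finset.card_erase_of_mem hv
        have h2 : 1 ≤ S.card := Finset.card_pos.2 ⟨v, hv⟩
        omega
      have hS'u : S.erase v ≠ univ := by
        intro h
        exact (Finset.notMem_erase v S) (h ▸ Finset.mem_univ v)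
      obtain ⟨hposS', hratS'⟩ := ih (S.erase v) hS'card hS'u
      have hzrS' : 0 < zs G (S.erase v) (-b) := posZ' hb hc hS'u
      have hTvu : rem G S v ≠ univ := by
        intro h
        exact not_mem_rem (G := G) (S := S) (v := v) (by rw [h]; exact Finset.mem_univ v)
      have hzrT : 0 < zs G (rem G S v) (-b) := posZ' hb hc hTvu
      have hrecC : zs G S lam = zs G (S.erase v) lam + lam * zs G (rem G S v) lam :=
        zs_rec G hv lam
      have hrecR : zs G S (-b) = zs G (S.erase v) (-b) + (-b) * zs G (rem G S v) (-b) :=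
        zs_rec G hv (-b)
      by_cases hTS : rem G S v = S.erase v
      · rw [hTS] at hrecC hrecR
        have hfact : zs G S lam = (1 + lam) * zs G (S.erase v) lam := by rw [hrecC]; ring
        have hfactR : zs G S (-b) = (1 - b) * zs G (S.erase v) (-b) := by rw [hrecR]; ring
        rw [hfact, hfactR, norm_mul]
        have h1 := one_add_abs_gt hb0 hb1 habs hne
        nlinarith [mul_lt_mul_of_pos_right h1 (mul_pos hzrS' hposS')]
      · have hrat : zs G (S.erase v) (-b) * ‖zs G (rem G S v) lam‖
            < zs G (rem G S v) (-b) * ‖zs G (S.erase v) lam‖ :=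
          hratS' (rem G S v) rem_subset_erase hTS
        have htri : ‖zs G (S.erase v) lam‖
            - b * ‖zs G (rem G S v) lam‖ ≤ ‖zs G S lam‖ := by
          rw [hrecC]
          have h1 := abs_lower (zs G (S.erase v) lam) (lam * zs G (rem G S v) lam)
          rw [norm_mul] at h1
          have h2 : ‖lam‖ * ‖zs G (rem G S v) lam‖
              ≤ b * ‖zs G (rem G S v) lam‖ :=
            mul_le_mul_of_nonneg_right habs (norm_nonneg _)
          linarith
        have A := mul_le_mul_of_nonneg_left htri hzrS'.le
        have B := mul_lt_mul_of_pos_left hrat hb0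
        rw [hrecR]
        nlinarith [A, B]
    -- positivity of |zs G S lam|
    rcases Finset.eq_empty_or_nonempty S with rfl | hSne
    · constructor
      · rw [zs_empty]; simp
      · intro T hT hTne
        exact absurd (Finset.subset_empty.1 hT) hTne
    obtain ⟨v, hv⟩ := hSne
    have hS'card : (S.erase v).card ≤ n := by
      have h1 := Finset.card_erase_of_mem hv
      have h2 : 1 ≤ S.card := Finset.card_pos.2 ⟨v, hv⟩
      omega
    have hS'u : S.erase v ≠ univ := by
      intro h
      exact (Finset.notMem_erase v S) (h ▸ Finset.mem_univ v)
    obtain ⟨hposS', _⟩ := ih (S.erase v) hS'card hS'u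
    have hzrS' : 0 < zs G (S.erase v) (-b) := posZ' hb hc hS'u
    have hposS : 0 < ‖zs G S lam‖ := by
      have hstep := step v hv
      nlinarith [mul_pos hzrS hposS', norm_nonneg (zs G S lam)]
    refine ⟨hposS, ?_⟩
    intro T hT hTne
    obtain ⟨w, hwS, hwT⟩ : ∃ w ∈ S, w ∉ T := by
      by_contra hcon
      push_neg at hcon
      exact hTne (Finset.Subset.antisymm hT hcon)
    have hW'card : (S.erase w).card ≤ n := by
      have h1 := Finset.card_erase_of_mem hwS
      have h2 : 1 ≤ S.card := Finset.card_pos.2 ⟨w, hwS⟩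
      omega
    have hW'u : S.erase w ≠ univ := by
      intro h
      exact (Finset.notMem_erase w S) (h ▸ Finset.mem_univ w)
    have hzrW' : 0 < zs G (S.erase w) (-b) := posZ' hb hc hW'u
    have hTsub : T ⊆ S.erase w := Finset.subset_erase.2 ⟨hT, hwT⟩
    have hstepw := step w hwS
    by_cases hTW : T = S.erase w
    · rw [hTW]
      exact hstepw
    · have hTu : T ≠ univ := by
        intro h
        exact hSu (Finset.univ_subset_iff.1 (h ▸ hT))
      have hzrT : 0 < zs G T (-b) := posZ' hb hc hTu
      have ihT := (ih (S.erase w) hW'card hW'u).2 T hTsub hTW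
      have m1 := mul_lt_mul_of_pos_left ihT hzrS
      have m2 := mul_lt_mul_of_pos_left hstepw hzrT
      have key : zs G (S.erase w) (-b) * (zs G S (-b) * ‖zs G T lam‖)
          < zs G (S.erase w) (-b) * (zs G T (-b) * ‖zs G S lam‖) := by
        nlinarith [m1, m2]
      exact lt_of_mul_lt_mul_left key hzrW'.le


lemma modulus (hb : IsBetaZero (indepPoly G) b) (hc : G.Connected) :
    ∀ ξ : ℂ, Polynomial.aeval ξ (indepPoly G) = 0 → ξ ≠ (b : ℂ) → b < ‖ξ‖ := by
  intro ξ hroot hne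
  by_contra hcon
  push_neg at hcon
  have hb0 : 0 < b := hb.1.1
  set lam : ℂ := -ξ with hlam
  have habs : ‖lam‖ ≤ b := by
    rw [hlam, norm_neg]
    exact hcon
  have hlne : lam ≠ -(b : ℂ) := by
    intro h
    exact hne (neg_injective (hlam ▸ h))
  have hzero : zs G univ lam = 0 := by
    rw [aeval_indepPoly] at hroot
    exact hroot
  have hR0 : zs G univ (-b) = 0 := by
    rw [← eval_indepPoly]
    exact hb.2.1
  haveI := hc.nonempty
  obtain ⟨v⟩ := (inferInstance : Nonempty V)
  have hS'u : (univ : Finset V).erase v ≠ univ := by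
    intro h
    exact (Finset.notMem_erase v univ) (by rw [h]; exact Finset.mem_univ v)
  have hTvu : rem G univ v ≠ univ := by
    intro h
    exact not_mem_rem (G := G) (S := univ) (v := v) (by rw [h]; exact Finset.mem_univ v)
  have hrecC := zs_rec G (Finset.mem_univ v) lam
  have hrecR := zs_rec G (Finset.mem_univ v) (-b : ℝ)
  rw [hzero] at hrecC
  rw [hR0] at hrecR
  obtain ⟨hposS', hrat⟩ := mainInd hb hc habs hlne ((univ : Finset V).erase v).card
    ((univ : Finset V).erase v) le_rfl hS'u
  have hzrS' : 0 < zs G (univ.erase v) (-b) := posZ' hb hc hS'u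
  have hzrT : 0 < zs G (rem G univ v) (-b) := posZ' hb hc hTvu
  by_cases hTS : rem G univ v = (univ : Finset V).erase v
  · rw [hTS] at hrecC hrecR
    have hfacC : (1 + lam) * zs G (univ.erase v) lam = 0 := by
      linear_combination -hrecC
    rcases mul_eq_zero.1 hfacC with h | h
    · have hlm1 : lam = -1 := by linear_combination h
      have hmul : (1 - b) * zs G (univ.erase v) (-b) = 0 := by linarith [hrecR]
      rcases mul_eq_zero.1 hmul with h2 | h2
      · apply hlne
        rw [hlm1]
        have : b = 1 := by linarith
        rw [this]
        norm_num
      · rw [h2] at hzrS'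
        exact lt_irrefl _ hzrS'
    · rw [h] at hposS'
      simp at hposS'
  · have hstrict := hrat (rem G univ v) rem_subset_erase hTS
    have heq : ‖zs G (univ.erase v) lam‖
        ≤ b * ‖zs G (rem G univ v) lam‖ := by
      have hx : zs G (univ.erase v) lam = -(lam * zs G (rem G univ v) lam) := by
        linear_combination -hrecC
      rw [hx, norm_neg, norm_mul]
      exact mul_le_mul_of_nonneg_right habs (norm_nonneg _)
    have hrel : zs G (univ.erase v) (-b) = b * zs G (rem G univ v) (-b) := by
      linarith [hrecR]
    nlinarith [mul_lt_mul_of_pos_left hstrict hb0, mul_le_mul_of_nonneg_left heq hzrS'.le, hrel]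

end ComplexPart

end Stmt11Aux


/-- for connected `G`, the smallest zero `β(G)` of `I(G,x)` in `(0,1]`
is a simple zero, and every other complex zero `ξ` satisfies `|ξ| > β(G)`. -/
theorem stmt11 {V : Type*} [Fintype V] (G : SimpleGraph V) (hc : G.Connected)
    (b : ℝ) (hb : IsBetaZero (indepPoly G) b) :
    (indepPoly G).rootMultiplicity b = 1 ∧
      ∀ ξ : ℂ, Polynomial.aeval ξ (indepPoly G) = 0 → ξ ≠ (b : ℂ) →
        b < ‖ξ‖ := by
  exact ⟨Stmt11Aux.mult_one hb hc, Stmt11Aux.modulus hb hc⟩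
end
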